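/- arXiv:1007.1124 — 2 statements merged into one kernel-verified Lean document; each statement's English description precedes it below -/
import Mathlib

section
/- Let ρ be a random time on (Ω, F, 𝐅, P) with canonical pair (K, L). Then for every nondecreasing function f: [0,1) → ℝ it holds that E_P[f(K_{ρ−})] ≤ ∫_{[0,1)} f(u) du ≤ E_P[f(K_ρ)]. In other words, the law of K_{ρ−} under P is first-order stochastically dominated by the standard uniform law on [0,1), and the standard uniform law is first-order stochastically dominated by the law of K_ρ under P. -/
open MeasureTheory Filter Set ProbabilityTheory
open scoped ENNReal NNReal Topology

noncomputable section

namespace RandTimes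

variable {Ω : Type*} {m : MeasurableSpace Ω}

/-- Left limit of a real-valued path indexed by `ℝ≥0`, with the paper's convention that
the left limit at time `0` equals `0`. -/
noncomputable def llim (f : ℝ≥0 → ℝ) (t : ℝ≥0) : ℝ :=
  if t = 0 then 0 else Function.leftLim f t

/-- Right-continuity of a filtration: `𝓕 t = ⋂_{s > t} 𝓕 s`. -/
def RightContFiltration (ℱ : Filtration ℝ≥0 m) : Prop :=
  ∀ t : ℝ≥0, (ℱ t : MeasurableSpace Ω) = ⨅ s ∈ Set.Ioi t, (ℱ s : MeasurableSpace Ω)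

/-- `L` is a local martingale on `(Ω, 𝐅, μ)`: it is adapted, has `μ`-a.s. càdlàg paths, and
there is a nondecreasing sequence of stopping times increasing to `∞` such that each stopped
process is a martingale. -/
def IsLocalMartingale (ℱ : Filtration ℝ≥0 m) (μ : Measure Ω) (L : ℝ≥0 → Ω → ℝ) : Prop :=
  Adapted ℱ L ∧
  (∀ᵐ ω ∂μ, (∀ t, ContinuousWithinAt (fun s => L s ω) (Set.Ici t) t) ∧
      (∀ t : ℝ≥0, t ≠ 0 → ∃ c : ℝ, Tendsto (fun s => L s ω) (𝓝[<] t) (𝓝 c))) ∧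
  ∃ τ : ℕ → Ω → ℝ≥0,
    (∀ n, IsStoppingTime ℱ (fun ω => ((τ n ω : ℝ≥0) : WithTop ℝ≥0))) ∧
    (∀ ω, Monotone fun n => τ n ω) ∧
    (∀ ω, Tendsto (fun n => τ n ω) atTop atTop) ∧
    (∀ n, Martingale (MeasureTheory.stoppedProcess L (fun ω => ((τ n ω : ℝ≥0) : WithTop ℝ≥0))) ℱ μ)

/-- The optional σ-algebra on `ℝ≥0 × Ω`: the σ-algebra generated by all adapted
right-continuous processes. -/
def optionalSigma (ℱ : Filtration ℝ≥0 m) : MeasurableSpace (ℝ≥0 × Ω) :=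
  ⨆ X ∈ {X : ℝ≥0 → Ω → ℝ | Adapted ℱ X ∧
      ∀ ω t, ContinuousWithinAt (fun s => X s ω) (Set.Ici t) t},
    MeasurableSpace.comap (fun p : ℝ≥0 × Ω => X p.1 p.2) (inferInstance : MeasurableSpace ℝ)

/-- A process is optional if it is measurable with respect to the optional σ-algebra. -/
def IsOptional (ℱ : Filtration ℝ≥0 m) (V : ℝ≥0 → Ω → ℝ) : Prop :=
  @Measurable _ _ (optionalSigma ℱ) _ fun p : ℝ≥0 × Ω => V p.1 p.2

/-- Evaluation of a process at a `[0,∞]`-valued random time. -/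
noncomputable def evalT (V : ℝ≥0 → Ω → ℝ) (τ : Ω → ℝ≥0∞) (ω : Ω) : ℝ :=
  V (τ ω).toNNReal ω

/-- Evaluation of a process at a `[0,∞]`-valued random time, with the convention
`V_τ 1_{τ < ∞}`. -/
noncomputable def evalFin (V : ℝ≥0 → Ω → ℝ) (τ : Ω → ℝ≥0∞) (ω : Ω) : ℝ :=
  if τ ω < ⊤ then V (τ ω).toNNReal ω else 0

/-- Evaluation of a process at a `[0,∞]`-valued random time, where at `{τ = ∞}` the value
is the limit of the path at infinity. -/
noncomputable def evalLim (V : ℝ≥0 → Ω → ℝ) (τ : Ω → ℝ≥0∞) (ω : Ω) : ℝ :=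
  if τ ω < ⊤ then V (τ ω).toNNReal ω else limUnder atTop fun t : ℝ≥0 => V t ω

/-- `η_u = inf{t : K_t ≥ u}`, with `inf ∅ = ∞`. -/
noncomputable def hitTime (K : ℝ≥0 → Ω → ℝ) (u : ℝ) (ω : Ω) : ℝ≥0∞ :=
  sInf ((fun t : ℝ≥0 => (t : ℝ≥0∞)) '' {t : ℝ≥0 | u ≤ K t ω})

/-- `(K, L)` is the canonical pair associated with the random time `ρ` on `(Ω, 𝓕, 𝐅, P)`;
here `κ ω` is the Lebesgue–Stieltjes measure `dK(ω)` on `ℝ≥0` (with the convention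
`K_{0-} = 0`, so that `κ ω (Iic t) = K t ω`). -/
structure IsCanonicalPair (ℱ : Filtration ℝ≥0 m) (P : Measure Ω) (ρ : Ω → ℝ≥0∞)
    (K L : ℝ≥0 → Ω → ℝ) (κ : Ω → Measure ℝ≥0) : Prop where
  K_adapted : Adapted ℱ K
  K_rc : ∀ ω t, ContinuousWithinAt (fun s => K s ω) (Set.Ici t) t
  K_mono : ∀ ω, Monotone fun t => K t ω
  K_nonneg : ∀ t ω, 0 ≤ K t ω
  K_le_one : ∀ t ω, K t ω ≤ 1
  kappa_eq : ∀ ω t, κ ω (Set.Iic t) = ENNReal.ofReal (K t ω)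
  L_nonneg : ∀ t ω, 0 ≤ L t ω
  L_init : ∀ᵐ ω ∂P, L 0 ω = 1
  L_locMart : IsLocalMartingale ℱ P L
  eval_eq : ∀ V : ℝ≥0 → Ω → ℝ, IsOptional ℱ V → (∀ t ω, 0 ≤ V t ω) →
    ∫⁻ ω, ENNReal.ofReal (evalT V ρ ω) ∂P =
      ∫⁻ ω, (∫⁻ t, ENNReal.ofReal (V t ω * L t ω) ∂(κ ω)) ∂P
  L_flat : ∀ᵐ ω ∂P, ∀ s t : ℝ≥0, s ≤ t → llim (fun r => K r ω) s = 1 → L t ω = L s ω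
  kappa_nullL : ∀ᵐ ω ∂P, κ ω {t : ℝ≥0 | L t ω = 0} = 0

/-- The probability `Q_u` given by `dQ_u = L_{η_u} dP`. -/
noncomputable def Qu (P : Measure Ω) (K L : ℝ≥0 → Ω → ℝ) (u : ℝ) : Measure Ω :=
  P.withDensity fun ω => ENNReal.ofReal (evalLim L (hitTime K u) ω)

/-- The running supremum `M^*_t = sup_{s ≤ t} M_s`. -/
noncomputable def runSup (M : ℝ≥0 → Ω → ℝ) (t : ℝ≥0) (ω : Ω) : ℝ :=
  ⨆ s : Set.Iic t, M s.1 ω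

end RandTimes
namespace RandTimes

section Aux

variable {Ω : Type*} {m : MeasurableSpace Ω}

/-! ### Dyadic approximation from the right -/

/-- The `j`-th dyadic point at scale `k`. -/
noncomputable def dy (k j : ℕ) : ℝ≥0 := (j : ℝ≥0) / 2 ^ k

/-- Dyadic ceiling at scale `k`. -/
noncomputable def cdy (k : ℕ) (x : ℝ≥0) : ℝ≥0 := dy k ⌈(x : ℝ) * 2 ^ k⌉₊

lemma dy_coe (k j : ℕ) : ((dy k j : ℝ≥0) : ℝ) = (j : ℝ) / 2 ^ k := by
  simp [dy, NNReal.coe_div]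

lemma le_cdy (k : ℕ) (x : ℝ≥0) : x ≤ cdy k x := by
  rw [← NNReal.coe_le_coe, cdy, dy_coe]
  rw [le_div_iff₀ (by positivity : (0:ℝ) < 2 ^ k)]
  exact Nat.le_ceil _

lemma cdy_le (k : ℕ) (x : ℝ≥0) : (cdy k x : ℝ) ≤ (x : ℝ) + (2 ^ k : ℝ)⁻¹ := by
  rw [cdy, dy_coe, div_le_iff₀ (by positivity : (0:ℝ) < 2 ^ k)]
  have h1 : (⌈(x:ℝ) * 2 ^ k⌉₊ : ℝ) ≤ (x:ℝ) * 2 ^ k + 1 :=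
    (Nat.ceil_lt_add_one (by positivity)).le
  have h2 : ((x:ℝ) + (2 ^ k : ℝ)⁻¹) * 2 ^ k = (x:ℝ) * 2 ^ k + 1 := by
    field_simp
  linarith

lemma cdy_monotone (k : ℕ) : Monotone (cdy k) := by
  intro a b hab
  rw [← NNReal.coe_le_coe, cdy, cdy, dy_coe, dy_coe]
  gcongr

lemma measurable_cdy (k : ℕ) : Measurable (cdy k) := (cdy_monotone k).measurable

lemma tendsto_cdy (x : ℝ≥0) : Tendsto (fun k => cdy k x) atTop (𝓝 x) := by
  rw [← NNReal.tendsto_coe]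
  have h1 : Tendsto (fun k : ℕ => (x : ℝ) + (2 ^ k : ℝ)⁻¹) atTop (𝓝 ((x : ℝ) + 0)) := by
    refine tendsto_const_nhds.add ?_
    exact tendsto_inv_atTop_zero.comp (tendsto_pow_atTop_atTop_of_one_lt (by norm_num : (1:ℝ) < 2))
  rw [add_zero] at h1
  refine tendsto_of_tendsto_of_tendsto_of_le_of_le tendsto_const_nhds h1 ?_ ?_
  · exact fun k => NNReal.coe_le_coe.2 (le_cdy k x)
  · exact fun k => cdy_le k x

lemma tendsto_cdy_within (x : ℝ≥0) :
    Tendsto (fun k => cdy k x) atTop (𝓝[Set.Ici x] x) := by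
  rw [tendsto_nhdsWithin_iff]
  exact ⟨tendsto_cdy x, Filter.Eventually.of_forall fun k => le_cdy k x⟩

/-- Collapse of a `⨆`/`ite` encoding of evaluation at a countably-valued point. -/
lemma iSup_ite_eq {g : ℝ≥0 → ℝ≥0∞} (val : ℕ → ℝ≥0) {x : ℝ≥0} (j0 : ℕ) (hx : x = val j0) :
    (⨆ j : ℕ, if x = val j then g (val j) else 0) = g x := by
  refine le_antisymm (iSup_le fun j => ?_) ?_
  · split_ifs with h
    · rw [← h]
    · exact zero_le
  · refine le_iSup_of_le j0 ?_
    rw [if_pos hx, ← hx]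

/-! ### Measurable right-limit representation of a process along dyadic times -/

/-- `dyad X (t, ω) = ofReal (X t ω)` whenever `X · ω` is right-continuous at `t`;
it is jointly measurable as soon as each `X t` is measurable. -/
noncomputable def dyad (X : ℝ≥0 → Ω → ℝ) : ℝ≥0 × Ω → ℝ≥0∞ := fun p =>
  Filter.limsup (fun k : ℕ =>
    ⨆ j : ℕ, if cdy k p.1 = dy k j then ENNReal.ofReal (X (dy k j) p.2) else 0) atTop

lemma dyad_apply (X : ℝ≥0 → Ω → ℝ) (p : ℝ≥0 × Ω) :
    dyad X p = Filter.limsup (fun k : ℕ => ENNReal.ofReal (X (cdy k p.1) p.2)) atTop := by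
  unfold dyad
  congr 1
  funext k
  exact iSup_ite_eq (g := fun s => ENNReal.ofReal (X s p.2)) (dy k) ⌈(p.1 : ℝ) * 2 ^ k⌉₊ rfl

lemma dyad_eq {X : ℝ≥0 → Ω → ℝ} {t : ℝ≥0} {ω : Ω}
    (hrc : ContinuousWithinAt (fun s => X s ω) (Set.Ici t) t) :
    dyad X (t, ω) = ENNReal.ofReal (X t ω) := by
  rw [dyad_apply]
  refine Filter.Tendsto.limsup_eq ?_
  exact (ENNReal.continuous_ofReal.tendsto _).comp (hrc.tendsto.comp (tendsto_cdy_within t))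

lemma measurable_dyad {X : ℝ≥0 → Ω → ℝ} (hX : ∀ s, Measurable (X s)) :
    Measurable (dyad X) := by
  refine Measurable.limsup fun k => Measurable.iSup fun j => Measurable.ite ?_ ?_ measurable_const
  · exact ((measurable_cdy k).comp measurable_fst) (measurableSet_singleton (dy k j))
  · exact ((hX (dy k j)).comp measurable_snd).ennreal_ofReal

end Aux

end RandTimes
namespace RandTimes

section Hit

variable {Ω : Type*} {m : MeasurableSpace Ω} {K : ℝ≥0 → Ω → ℝ}

lemma tendsto_inv_nat_nnreal : Tendsto (fun n : ℕ => ((n : ℝ≥0) + 1)⁻¹) atTop (𝓝 0) := by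
  rw [← NNReal.tendsto_coe]
  have := tendsto_one_div_add_atTop_nhds_zero_nat (𝕜 := ℝ)
  simpa [one_div] using this

lemma hitTime_le_iff (hmono : ∀ ω, Monotone fun t => K t ω)
    (hrc : ∀ ω t, ContinuousWithinAt (fun s => K s ω) (Set.Ici t) t)
    (v : ℝ) (ω : Ω) (t : ℝ≥0) : hitTime K v ω ≤ t ↔ v ≤ K t ω := by
  constructor
  · intro h
    by_contra hv
    push_neg at hv
    have key : ∀ n : ℕ, v ≤ K (t + ((n : ℝ≥0) + 1)⁻¹) ω := by
      intro n
      have hpos : (0 : ℝ≥0) < ((n : ℝ≥0) + 1)⁻¹ := by positivity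
      have hlt : hitTime K v ω < ((t + ((n : ℝ≥0) + 1)⁻¹ : ℝ≥0) : ℝ≥0∞) := by
        refine lt_of_le_of_lt h ?_
        exact_mod_cast lt_add_of_pos_right t hpos
      obtain ⟨a, ha, hlt'⟩ := sInf_lt_iff.mp hlt
      obtain ⟨s, hs, rfl⟩ := ha
      have hlt2 : (s : ℝ≥0∞) ≤ ((t + ((n : ℝ≥0) + 1)⁻¹ : ℝ≥0) : ℝ≥0∞) := hlt'.le
      have hst : s ≤ t + ((n : ℝ≥0) + 1)⁻¹ := by exact_mod_cast hlt2
      exact hs.trans (hmono ω hst)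
    have htend : Tendsto (fun n : ℕ => K (t + ((n : ℝ≥0) + 1)⁻¹) ω) atTop (𝓝 (K t ω)) := by
      refine (hrc ω t).tendsto.comp ?_
      rw [tendsto_nhdsWithin_iff]
      constructor
      · have h1 : Tendsto (fun n : ℕ => t + ((n : ℝ≥0) + 1)⁻¹) atTop (𝓝 (t + 0)) :=
          tendsto_const_nhds.add tendsto_inv_nat_nnreal
        simpa using h1
      · exact Filter.Eventually.of_forall fun n => Set.mem_Ici.2 le_self_add
    exact absurd (ge_of_tendsto htend (Filter.Eventually.of_forall key)) hv.not_ge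
  · intro h
    exact sInf_le ⟨t, h, rfl⟩

lemma K_lt_of_lt_hitTime (hmono : ∀ ω, Monotone fun t => K t ω)
    (hrc : ∀ ω t, ContinuousWithinAt (fun s => K s ω) (Set.Ici t) t)
    {v : ℝ} {ω : Ω} {s : ℝ≥0} (h : (s : ℝ≥0∞) < hitTime K v ω) : K s ω < v := by
  by_contra hv
  push_neg at hv
  exact absurd ((hitTime_le_iff hmono hrc v ω s).2 hv) h.not_ge

lemma hitTime_mono (ω : Ω) : Monotone fun v : ℝ => hitTime K v ω := by
  intro a b hab
  refine sInf_le_sInf (Set.image_mono ?_)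
  intro t ht
  exact hab.trans ht

/-- The (everywhere finite) hitting time, as an `ℝ≥0`-valued map. -/
noncomputable def etaT (K : ℝ≥0 → Ω → ℝ) (v : ℝ) (ω : Ω) : ℝ≥0 := (hitTime K v ω).toNNReal

/-- The total increase of `K`. -/
noncomputable def Ksup (K : ℝ≥0 → Ω → ℝ) (ω : Ω) : ℝ := ⨆ n : ℕ, K n ω

lemma bddAbove_rangeK (hb : ∀ t ω, K t ω ≤ 1) (ω : Ω) :
    BddAbove (Set.range fun n : ℕ => K n ω) := by
  refine ⟨1, ?_⟩
  rintro x ⟨n, rfl⟩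
  exact hb n ω

lemma K_le_Ksup (hmono : ∀ ω, Monotone fun t => K t ω) (hb : ∀ t ω, K t ω ≤ 1)
    (t : ℝ≥0) (ω : Ω) : K t ω ≤ Ksup K ω := by
  obtain ⟨n, hn⟩ := exists_nat_ge t
  exact (hmono ω hn).trans (le_ciSup (bddAbove_rangeK hb ω) n)

lemma Ksup_le_one (hb : ∀ t ω, K t ω ≤ 1) (ω : Ω) : Ksup K ω ≤ 1 :=
  ciSup_le fun n => hb n ω

lemma Ksup_nonneg (hmono : ∀ ω, Monotone fun t => K t ω) (h0 : ∀ t ω, 0 ≤ K t ω)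
    (hb : ∀ t ω, K t ω ≤ 1) (ω : Ω) : 0 ≤ Ksup K ω :=
  (h0 0 ω).trans (K_le_Ksup hmono hb 0 ω)

lemma lt_Ksup_iff (hb : ∀ t ω, K t ω ≤ 1) {v : ℝ} {ω : Ω} :
    v < Ksup K ω ↔ ∃ n : ℕ, v < K n ω :=
  lt_ciSup_iff (bddAbove_rangeK hb ω)

lemma hitTime_ne_top (hmono : ∀ ω, Monotone fun t => K t ω)
    (hrc : ∀ ω t, ContinuousWithinAt (fun s => K s ω) (Set.Ici t) t)
    (hb : ∀ t ω, K t ω ≤ 1) {v : ℝ} {ω : Ω} (h : v < Ksup K ω) : hitTime K v ω ≠ ⊤ := by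
  obtain ⟨n, hn⟩ := (lt_Ksup_iff hb).1 h
  have : hitTime K v ω ≤ (n : ℝ≥0) := (hitTime_le_iff hmono hrc v ω n).2 hn.le
  exact this.trans_lt ENNReal.coe_lt_top |>.ne

lemma etaT_le_iff (hmono : ∀ ω, Monotone fun t => K t ω)
    (hrc : ∀ ω t, ContinuousWithinAt (fun s => K s ω) (Set.Ici t) t)
    {v : ℝ} {ω : Ω} (hv : hitTime K v ω ≠ ⊤) (t : ℝ≥0) :
    etaT K v ω ≤ t ↔ v ≤ K t ω := by
  rw [← hitTime_le_iff hmono hrc v ω t, etaT, ← ENNReal.coe_le_coe, ENNReal.coe_toNNReal hv]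

lemma le_K_etaT (hmono : ∀ ω, Monotone fun t => K t ω)
    (hrc : ∀ ω t, ContinuousWithinAt (fun s => K s ω) (Set.Ici t) t)
    {v : ℝ} {ω : Ω} (hv : hitTime K v ω ≠ ⊤) : v ≤ K (etaT K v ω) ω :=
  (etaT_le_iff hmono hrc hv _).1 le_rfl

lemma K_lt_of_lt_etaT (hmono : ∀ ω, Monotone fun t => K t ω)
    (hrc : ∀ ω t, ContinuousWithinAt (fun s => K s ω) (Set.Ici t) t)
    {v : ℝ} {ω : Ω} {s : ℝ≥0} (h : s < etaT K v ω) : K s ω < v := by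
  refine K_lt_of_lt_hitTime hmono hrc ?_
  calc (s : ℝ≥0∞) < (etaT K v ω : ℝ≥0∞) := by exact_mod_cast h
    _ ≤ hitTime K v ω := ENNReal.coe_toNNReal_le_self

lemma measurable_etaT (ω : Ω) : Measurable fun v : ℝ => etaT K v ω :=
  ENNReal.measurable_toNNReal.comp (hitTime_mono ω).measurable

lemma measurable_hitTime_prod (hmono : ∀ ω, Monotone fun t => K t ω)
    (hrc : ∀ ω t, ContinuousWithinAt (fun s => K s ω) (Set.Ici t) t)
    (hKm : ∀ t, Measurable (K t)) :
    Measurable fun p : ℝ × Ω => hitTime K p.1 p.2 := by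
  refine measurable_of_Iic fun x => ?_
  rcases eq_or_ne x ⊤ with rfl | hx
  · simp
  · have : (fun p : ℝ × Ω => hitTime K p.1 p.2) ⁻¹' Set.Iic x
        = {p : ℝ × Ω | p.1 ≤ K x.toNNReal p.2} := by
      ext p
      simp only [Set.mem_preimage, Set.mem_Iic, Set.mem_setOf_eq]
      rw [← ENNReal.coe_toNNReal hx]
      exact hitTime_le_iff hmono hrc p.1 p.2 x.toNNReal
    rw [this]
    exact measurableSet_le measurable_fst ((hKm _).comp measurable_snd)

lemma measurable_etaT_prod (hmono : ∀ ω, Monotone fun t => K t ω)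
    (hrc : ∀ ω t, ContinuousWithinAt (fun s => K s ω) (Set.Ici t) t)
    (hKm : ∀ t, Measurable (K t)) :
    Measurable fun p : ℝ × Ω => etaT K p.1 p.2 :=
  ENNReal.measurable_toNNReal.comp (measurable_hitTime_prod hmono hrc hKm)

lemma measurable_Ksup (hKm : ∀ t, Measurable (K t)) (h0 : ∀ t ω, 0 ≤ K t ω)
    (hb : ∀ t ω, K t ω ≤ 1) : Measurable (Ksup K) := by
  have h : ∀ ω, Ksup K ω = (⨆ n : ℕ, ENNReal.ofReal (K n ω)).toReal := by
    intro ω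
    have hbdd := bddAbove_rangeK hb ω
    have hmap : ENNReal.ofReal (⨆ n : ℕ, K n ω) = ⨆ n : ℕ, ENNReal.ofReal (K n ω) :=
      Monotone.map_ciSup_of_continuousAt ENNReal.continuous_ofReal.continuousAt
        (fun a b hab => ENNReal.ofReal_le_ofReal hab) hbdd
    rw [Ksup, ← hmap, ENNReal.toReal_ofReal]
    exact le_ciSup_of_le hbdd 0 (h0 _ ω)
  rw [show Ksup K = fun ω => (⨆ n : ℕ, ENNReal.ofReal (K n ω)).toReal from funext h]
  exact (Measurable.iSup fun n => (hKm _).ennreal_ofReal).ennreal_toReal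

end Hit

end RandTimes
namespace RandTimes

section Kap

variable {Ω : Type*} {m : MeasurableSpace Ω} {K : ℝ≥0 → Ω → ℝ}

lemma univ_eq_iUnion_Iic : (Set.univ : Set ℝ≥0) = ⋃ n : ℕ, Set.Iic (n : ℝ≥0) := by
  ext x
  simp only [Set.mem_univ, Set.mem_iUnion, Set.mem_Iic, true_iff]
  exact exists_nat_ge x

lemma kappa_finite {κ : Measure ℝ≥0} {ω : Ω}
    (hκ : ∀ t, κ (Set.Iic t) = ENNReal.ofReal (K t ω)) (hb : ∀ t ω, K t ω ≤ 1) :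
    IsFiniteMeasure κ := by
  constructor
  have h1 : κ Set.univ = ⨆ n : ℕ, κ (Set.Iic (n : ℝ≥0)) := by
    rw [univ_eq_iUnion_Iic]
    exact Monotone.measure_iUnion
      (fun a b hab => Set.Iic_subset_Iic.2 (by exact_mod_cast hab))
  have h2 : κ Set.univ ≤ 1 := by
    rw [h1]
    refine iSup_le fun n => ?_
    rw [hκ]
    simpa using ENNReal.ofReal_le_ofReal (hb n ω)
  exact h2.trans_lt ENNReal.one_lt_top

lemma kappa_eq_map (hmono : ∀ ω, Monotone fun t => K t ω)
    (hrc : ∀ ω t, ContinuousWithinAt (fun s => K s ω) (Set.Ici t) t)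
    (h0 : ∀ t ω, 0 ≤ K t ω) (hb : ∀ t ω, K t ω ≤ 1)
    {κ : Measure ℝ≥0} {ω : Ω} (hκ : ∀ t, κ (Set.Iic t) = ENNReal.ofReal (K t ω)) :
    κ = Measure.map (fun v : ℝ => etaT K v ω)
      (MeasureTheory.volume.restrict (Set.Ico (0 : ℝ) (Ksup K ω))) := by
  haveI := kappa_finite hκ hb
  refine MeasureTheory.Measure.ext_of_Iic _ _ fun a => ?_
  rw [Measure.map_apply (measurable_etaT ω) measurableSet_Iic,
    Measure.restrict_apply ((measurable_etaT ω) measurableSet_Iic)]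
  have hset : (fun v : ℝ => etaT K v ω) ⁻¹' Set.Iic a ∩ Set.Ico 0 (Ksup K ω)
      = Set.Iic (K a ω) ∩ Set.Ico 0 (Ksup K ω) := by
    ext v
    simp only [Set.mem_inter_iff, Set.mem_preimage, Set.mem_Iic, Set.mem_Ico]
    constructor
    · rintro ⟨h1, h2⟩
      have hfin := hitTime_ne_top hmono hrc hb h2.2
      exact ⟨(etaT_le_iff hmono hrc hfin a).1 h1, h2⟩
    · rintro ⟨h1, h2⟩
      have hfin := hitTime_ne_top hmono hrc hb h2.2
      exact ⟨(etaT_le_iff hmono hrc hfin a).2 h1, h2⟩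
  rw [hset, hκ]
  rcases lt_or_eq_of_le (K_le_Ksup hmono hb a ω) with hlt | heq
  · have : Set.Iic (K a ω) ∩ Set.Ico 0 (Ksup K ω) = Set.Icc 0 (K a ω) := by
      ext v
      simp only [Set.mem_inter_iff, Set.mem_Iic, Set.mem_Ico, Set.mem_Icc]
      constructor
      · rintro ⟨h1, h2⟩; exact ⟨h2.1, h1⟩
      · rintro ⟨h1, h2⟩; exact ⟨h2, h1, h2.trans_lt hlt⟩
    rw [this, Real.volume_Icc, sub_zero]
  · have : Set.Iic (K a ω) ∩ Set.Ico 0 (Ksup K ω) = Set.Ico 0 (Ksup K ω) := by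
      ext v
      simp only [Set.mem_inter_iff, Set.mem_Iic, Set.mem_Ico]
      constructor
      · rintro ⟨_, h2⟩; exact h2
      · rintro ⟨h1, h2⟩; exact ⟨heq ▸ h2.le, h1, h2⟩
    rw [this, Real.volume_Ico, sub_zero, heq]

lemma lintegral_kappa (hmono : ∀ ω, Monotone fun t => K t ω)
    (hrc : ∀ ω t, ContinuousWithinAt (fun s => K s ω) (Set.Ici t) t)
    (h0 : ∀ t ω, 0 ≤ K t ω) (hb : ∀ t ω, K t ω ≤ 1)
    {κ : Measure ℝ≥0} {ω : Ω} (hκ : ∀ t, κ (Set.Iic t) = ENNReal.ofReal (K t ω))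
    {h : ℝ≥0 → ℝ≥0∞} (hh : Measurable h) :
    ∫⁻ t, h t ∂κ = ∫⁻ v in Set.Ico (0 : ℝ) (Ksup K ω), h (etaT K v ω) := by
  rw [kappa_eq_map hmono hrc h0 hb hκ, MeasureTheory.lintegral_map hh (measurable_etaT ω)]

end Kap

end RandTimes
namespace RandTimes

section LL

variable {Ω : Type*} {m : MeasurableSpace Ω} {K : ℝ≥0 → Ω → ℝ}

lemma neBot_Iio {t : ℝ≥0} (ht : t ≠ 0) : (𝓝[<] t).NeBot :=
  nhdsWithin_Iio_self_neBot' ⟨0, (zero_lt_iff.mpr ht)⟩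

lemma llim_nonneg (hmono : Monotone f) (h0 : ∀ t, 0 ≤ f t) (t : ℝ≥0) : 0 ≤ llim f t := by
  rw [llim]
  split_ifs with h
  · exact le_refl 0
  · exact (h0 0).trans (hmono.le_leftLim ((zero_lt_iff.mpr h)))

lemma llim_le (hmono : Monotone f) {t : ℝ≥0} {v : ℝ} (hv : 0 ≤ v)
    (h : ∀ s, s < t → f s ≤ v) : llim f t ≤ v := by
  rw [llim]
  split_ifs with ht
  · exact hv
  · haveI := neBot_Iio ht
    refine le_of_tendsto (hmono.tendsto_leftLim t) ?_
    exact eventually_nhdsWithin_of_forall fun s hs => h s hs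

lemma llim_le_self (hmono : Monotone f) (h0 : ∀ t, 0 ≤ f t) (t : ℝ≥0) :
    llim f t ≤ f t :=
  llim_le hmono (h0 t) fun s hs => hmono hs.le

/-- The left limit as a supremum over shifted times, valid at every `t ≠ 0`. -/
lemma llim_eq_iSup_shift (hmono : Monotone f) (h0 : ∀ t, 0 ≤ f t) {t : ℝ≥0} (ht : t ≠ 0) :
    llim f t = (⨆ n : ℕ, ENNReal.ofReal (f (t - ((n : ℝ≥0) + 1)⁻¹))).toReal := by
  haveI := neBot_Iio ht
  have h1 : (⨆ n : ℕ, ENNReal.ofReal (f (t - ((n : ℝ≥0) + 1)⁻¹)))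
      = ENNReal.ofReal (Function.leftLim f t) := by
    refine le_antisymm (iSup_le fun n => ?_) ?_
    · have hlt : t - ((n : ℝ≥0) + 1)⁻¹ < t :=
        tsub_lt_self ((zero_lt_iff.mpr ht)) (by positivity)
      exact ENNReal.ofReal_le_ofReal (hmono.le_leftLim hlt)
    · have htend : Tendsto (fun n : ℕ => t - ((n : ℝ≥0) + 1)⁻¹) atTop (𝓝[<] t) := by
        rw [tendsto_nhdsWithin_iff]
        constructor
        · have h2 : Tendsto (fun n : ℕ => t - ((n : ℝ≥0) + 1)⁻¹) atTop (𝓝 (t - 0)) :=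
            Tendsto.sub tendsto_const_nhds tendsto_inv_nat_nnreal
          simpa using h2
        · exact Filter.Eventually.of_forall fun n =>
            tsub_lt_self ((zero_lt_iff.mpr ht)) (by positivity)
      have h3 : Tendsto (fun n : ℕ => ENNReal.ofReal (f (t - ((n : ℝ≥0) + 1)⁻¹))) atTop
          (𝓝 (ENNReal.ofReal (Function.leftLim f t))) :=
        (ENNReal.continuous_ofReal.tendsto _).comp ((hmono.tendsto_leftLim t).comp htend)
      exact le_of_tendsto h3 (Filter.Eventually.of_forall fun n => le_iSup (fun n : ℕ => ENNReal.ofReal (f (t - ((n : ℝ≥0) + 1)⁻¹))) n)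
  rw [llim, if_neg ht, h1, ENNReal.toReal_ofReal ((h0 0).trans (hmono.le_leftLim ((zero_lt_iff.mpr ht))))]

/-- The left limit as a supremum over rational times, valid at every `t` (including `0`,
where it gives the convention `llim f 0 = 0`). -/
lemma llim_eq_iSup_rat (hmono : Monotone f) (h0 : ∀ t, 0 ≤ f t) (t : ℝ≥0) :
    llim f t = (⨆ q : ℚ, if Real.toNNReal q < t
      then ENNReal.ofReal (f (Real.toNNReal q)) else 0).toReal := by
  rcases eq_or_ne t 0 with rfl | ht
  · simp [llim]
  · haveI := neBot_Iio ht
    have h1 : (⨆ q : ℚ, if Real.toNNReal q < t then ENNReal.ofReal (f (Real.toNNReal q)) else 0)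
        = ENNReal.ofReal (Function.leftLim f t) := by
      refine le_antisymm (iSup_le fun q => ?_) ?_
      · split_ifs with hq
        · exact ENNReal.ofReal_le_ofReal (hmono.le_leftLim hq)
        · exact zero_le
      · have h3 : Tendsto (fun s => ENNReal.ofReal (f s)) (𝓝[<] t)
            (𝓝 (ENNReal.ofReal (Function.leftLim f t))) :=
          (ENNReal.continuous_ofReal.tendsto _).comp (hmono.tendsto_leftLim t)
        refine le_of_tendsto h3 (eventually_nhdsWithin_of_forall fun s hs => ?_)
        obtain ⟨q, hq1, hq2⟩ := exists_rat_btwn (show (s : ℝ) < (t : ℝ) from hs)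
        have hq0 : (0 : ℝ) ≤ (q : ℝ) := le_of_lt (lt_of_le_of_lt s.coe_nonneg hq1)
        have hqt : Real.toNNReal q < t := (Real.toNNReal_lt_iff_lt_coe hq0).2 hq2
        have hsq : s ≤ Real.toNNReal q := (Real.le_toNNReal_iff_coe_le hq0).2 hq1.le
        calc ENNReal.ofReal (f s) ≤ ENNReal.ofReal (f (Real.toNNReal q)) :=
              ENNReal.ofReal_le_ofReal (hmono hsq)
          _ ≤ _ := le_iSup_of_le q (by rw [if_pos hqt])
    rw [llim, if_neg ht, h1, ENNReal.toReal_ofReal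
      ((h0 0).trans (hmono.le_leftLim ((zero_lt_iff.mpr ht))))]

end LL

end RandTimes
namespace RandTimes

section Opt

variable {Ω : Type*} {m : MeasurableSpace Ω} {ℱ : Filtration ℝ≥0 m}

lemma measurable_optional_of_mem {X : ℝ≥0 → Ω → ℝ} (h1 : Adapted ℱ X)
    (h2 : ∀ ω t, ContinuousWithinAt (fun s => X s ω) (Set.Ici t) t) :
    @Measurable _ _ (optionalSigma ℱ) _ fun p : ℝ≥0 × Ω => X p.1 p.2 := by
  have hle : MeasurableSpace.comap (fun p : ℝ≥0 × Ω => X p.1 p.2)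
      (inferInstance : MeasurableSpace ℝ) ≤ optionalSigma ℱ := by
    refine le_iSup₂ (f := fun (X : ℝ≥0 → Ω → ℝ) _ =>
      MeasurableSpace.comap (fun p : ℝ≥0 × Ω => X p.1 p.2)
        (inferInstance : MeasurableSpace ℝ)) X ?_
    exact ⟨h1, h2⟩
  exact fun s hs => hle _ ⟨s, hs, rfl⟩

lemma optional_K {K : ℝ≥0 → Ω → ℝ} (h1 : Adapted ℱ K)
    (h2 : ∀ ω t, ContinuousWithinAt (fun s => K s ω) (Set.Ici t) t) (c : ℝ≥0) :
    @Measurable _ _ (optionalSigma ℱ) _ fun p : ℝ≥0 × Ω => K (p.1 - c) p.2 := by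
  refine measurable_optional_of_mem (fun t => (h1 (t - c)).mono (ℱ.mono tsub_le_self) le_rfl) ?_
  intro ω t
  have hc : ContinuousWithinAt (fun s : ℝ≥0 => s - c) (Set.Ici t) t :=
    (by fun_prop : Continuous fun s : ℝ≥0 => s - c).continuousWithinAt
  show ContinuousWithinAt ((fun s => K s ω) ∘ (fun s : ℝ≥0 => s - c)) (Set.Ici t) t
  exact ContinuousWithinAt.comp (h2 ω (t - c)) hc fun s hs => tsub_le_tsub_right hs c

lemma measurableSet_zero_time :
    MeasurableSet[optionalSigma ℱ] {p : ℝ≥0 × Ω | p.1 = 0} := by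
  have hX : @Measurable _ _ (optionalSigma ℱ) _ fun p : ℝ≥0 × Ω => min (p.1 : ℝ) 1 := by
    refine measurable_optional_of_mem (X := fun t _ => min (t : ℝ) 1)
      (fun t => measurable_const) ?_
    intro ω t
    exact ((NNReal.continuous_coe.min continuous_const)).continuousWithinAt
  have hset : {p : ℝ≥0 × Ω | p.1 = 0} = (fun p : ℝ≥0 × Ω => min (p.1 : ℝ) 1) ⁻¹' {0} := by
    ext p
    simp only [Set.mem_setOf_eq, Set.mem_preimage, Set.mem_singleton_iff]
    constructor
    · intro h; rw [h]; simp
    · intro h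
      rcases min_cases (p.1 : ℝ) 1 with ⟨h1, _⟩ | ⟨h1, _⟩ <;> rw [h1] at h
      · exact_mod_cast h
      · norm_num at h
  rw [hset]
  exact hX (measurableSet_singleton 0)

end Opt

section OS

variable {Ω : Type*} {m : MeasurableSpace Ω} {ℱ : Filtration ℝ≥0 m} {P : Measure Ω}
  [IsProbabilityMeasure P]

lemma stoppedValue_sum_repr {M : ℝ≥0 → Ω → ℝ} {s : Ω → ℝ≥0} (S : Finset ℝ≥0)
    (hS : ∀ ω, s ω ∈ S) (ω : Ω) :
    M (s ω) ω = ∑ d ∈ S, Set.indicator {ω' | s ω' = d} (M d) ω := by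
  rw [Finset.sum_eq_single (s ω)]
  · rw [Set.indicator_of_mem (by exact rfl : ω ∈ {ω' | s ω' = s ω})]
  · intro b _ hb
    refine Set.indicator_of_notMem ?_ _
    intro h
    exact hb ((h : s ω = b)).symm
  · intro h; exact absurd (hS ω) h

lemma integral_stoppedValue_finite_range {M : ℝ≥0 → Ω → ℝ} (hM : Martingale M ℱ P)
    {s : Ω → ℝ≥0} (hs : IsStoppingTime ℱ (fun ω => (s ω : WithTop ℝ≥0))) (S : Finset ℝ≥0) (hS : ∀ ω, s ω ∈ S)
    {T : ℝ≥0} (hT : ∀ d ∈ S, d ≤ T) :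
    Integrable (fun ω => M (s ω) ω) P ∧ ∫ ω, M (s ω) ω ∂P = ∫ ω, M T ω ∂P := by
  have hcount : (Set.range s).Countable :=
    (S : Set ℝ≥0).to_countable.mono (by rintro x ⟨ω, rfl⟩; exact hS ω)
  have hAd : ∀ d : ℝ≥0, MeasurableSet[ℱ d] {ω | s ω = d} := fun d => by
    simpa only [WithTop.coe_eq_coe] using hs.measurableSet_eq_of_countable_range
      ((hcount.image WithTop.some).mono (by rintro x ⟨ω, rfl⟩; exact ⟨s ω, ⟨ω, rfl⟩, rfl⟩)) d
  have hAdm : ∀ d, MeasurableSet {ω | s ω = d} := fun d => ℱ.le d _ (hAd d)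
  have hrepr : (fun ω => M (s ω) ω)
      = fun ω => ∑ d ∈ S, Set.indicator {ω' | s ω' = d} (M d) ω :=
    funext (stoppedValue_sum_repr S hS)
  have hint : ∀ d ∈ S, Integrable (Set.indicator {ω' | s ω' = d} (M d)) P := fun d _ =>
    (hM.integrable d).indicator (hAdm d)
  constructor
  · rw [hrepr]
    exact integrable_finset_sum _ hint
  · rw [hrepr, integral_finset_sum _ hint]
    have h1 : ∀ d ∈ S, ∫ ω, Set.indicator {ω' | s ω' = d} (M d) ω ∂P
        = ∫ ω in {ω' | s ω' = d}, M T ω ∂P := by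
      intro d hd
      rw [integral_indicator (hAdm d)]
      rw [← MeasureTheory.setIntegral_condExp (ℱ.le d) (hM.integrable T) (hAd d)]
      refine setIntegral_congr_ae (hAdm d) ?_
      filter_upwards [hM.2 d T (hT d hd)] with ω hω
      intro _
      exact hω.symm
    rw [Finset.sum_congr rfl h1]
    have hdisj : (S : Set ℝ≥0).Pairwise (Function.onFun Disjoint fun d => {ω | s ω = d}) := by
      intro a _ b _ hab
      simp only [Function.onFun]
      rw [Set.disjoint_left]
      rintro ω h1' h2'
      exact hab ((h1' : s ω = a).symm.trans (h2' : s ω = b))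
    have hU : ⋃ d ∈ S, {ω | s ω = d} = Set.univ := by
      ext ω
      simp only [Set.mem_iUnion, Set.mem_setOf_eq, Set.mem_univ, iff_true]
      exact ⟨s ω, hS ω, rfl⟩
    rw [← MeasureTheory.integral_biUnion_finset S (fun d _ => hAdm d) hdisj
      (fun d _ => (hM.integrable T).integrableOn), hU, setIntegral_univ]

end OS

end RandTimes
namespace RandTimes

section Dyadic2

lemma toNNReal_le_coe' {x : ℝ≥0∞} {k : ℝ≥0} (h : x ≤ k) : x.toNNReal ≤ k := by
  have hne : x ≠ ⊤ := (h.trans_lt ENNReal.coe_lt_top).ne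
  have h2 := (ENNReal.toNNReal_le_toNNReal hne ENNReal.coe_ne_top).2 h
  simpa using h2

lemma dy_mono (k : ℕ) : Monotone (dy k) := by
  intro a b hab
  rw [← NNReal.coe_le_coe, dy_coe, dy_coe]
  gcongr

lemma dy_nat (k : ℕ) : dy k (k * 2 ^ k) = (k : ℝ≥0) := by
  rw [← NNReal.coe_inj, dy_coe]
  have : (2:ℝ) ^ k ≠ 0 := by positivity
  field_simp
  push_cast; ring

lemma cdy_dy (k j : ℕ) : cdy k (dy k j) = dy k j := by
  rw [cdy]
  congr 1
  rw [dy_coe]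
  have h2 : (2:ℝ) ^ k ≠ 0 := by positivity
  rw [div_mul_cancel₀ _ h2]
  exact Nat.ceil_natCast j

lemma cdy_le_nat (k : ℕ) {x : ℝ≥0} (hx : x ≤ k) : cdy k x ≤ k := by
  have h1 : ⌈(x:ℝ) * 2 ^ k⌉₊ ≤ k * 2 ^ k := by
    rw [Nat.ceil_le]
    push_cast
    gcongr
    exact_mod_cast hx
  calc cdy k x ≤ dy k (k * 2 ^ k) := dy_mono k h1
    _ = (k : ℝ≥0) := dy_nat k

lemma fl_le (k : ℕ) (t : ℝ≥0) : dy k ⌊(t:ℝ) * 2 ^ k⌋₊ ≤ t := by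
  rw [← NNReal.coe_le_coe, dy_coe, div_le_iff₀ (by positivity : (0:ℝ) < 2 ^ k)]
  exact Nat.floor_le (by positivity)

lemma le_fl {k j : ℕ} {t : ℝ≥0} (h : dy k j ≤ t) : dy k j ≤ dy k ⌊(t:ℝ) * 2 ^ k⌋₊ := by
  refine dy_mono k ?_
  rw [Nat.le_floor_iff (by positivity)]
  rw [← NNReal.coe_le_coe, dy_coe, div_le_iff₀ (by positivity : (0:ℝ) < 2 ^ k)] at h
  exact h

end Dyadic2

section Star

variable {Ω : Type*} {m : MeasurableSpace Ω} {ℱ : Filtration ℝ≥0 m} {P : Measure Ω}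
  [IsProbabilityMeasure P] {K L : ℝ≥0 → Ω → ℝ}

/-- The discretized stopping times approximating the hitting time from the right. -/
noncomputable def sdy (K : ℝ≥0 → Ω → ℝ) (v : ℝ) (k : ℕ) (ω : Ω) : ℝ≥0 :=
  if hitTime K v ω ≤ (k : ℝ≥0) then cdy k ((hitTime K v ω).toNNReal) else k

lemma sdy_le (v : ℝ) (k : ℕ) (ω : Ω) : sdy K v k ω ≤ k := by
  rw [sdy]
  split_ifs with h
  · exact cdy_le_nat k (toNNReal_le_coe' h)
  · exact le_rfl

lemma sdy_mem (v : ℝ) (k : ℕ) (ω : Ω) :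
    sdy K v k ω ∈ (Finset.range (k * 2 ^ k + 1)).image (dy k) := by
  rw [sdy]
  split_ifs with h
  · refine Finset.mem_image.2 ⟨⌈((hitTime K v ω).toNNReal : ℝ) * 2 ^ k⌉₊, ?_, rfl⟩
    rw [Finset.mem_range, Nat.lt_succ_iff, Nat.ceil_le]
    push_cast
    gcongr
    exact_mod_cast toNNReal_le_coe' h
  · refine Finset.mem_image.2 ⟨k * 2 ^ k, ?_, dy_nat k⟩
    exact Finset.mem_range.2 (Nat.lt_succ_self _)

lemma sdy_bound {k : ℕ} {d : ℝ≥0}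
    (hd : d ∈ (Finset.range (k * 2 ^ k + 1)).image (dy k)) : d ≤ k := by
  obtain ⟨j, hj, rfl⟩ := Finset.mem_image.1 hd
  rw [Finset.mem_range, Nat.lt_succ_iff] at hj
  calc dy k j ≤ dy k (k * 2 ^ k) := dy_mono k hj
    _ = (k : ℝ≥0) := dy_nat k

lemma sdy_isStoppingTime (hKad : Adapted ℱ K)
    (hKmono : ∀ ω, Monotone fun t => K t ω)
    (hKrc : ∀ ω t, ContinuousWithinAt (fun s => K s ω) (Set.Ici t) t)
    (v : ℝ) (k : ℕ) : IsStoppingTime ℱ (fun ω => (sdy K v k ω : WithTop ℝ≥0)) := by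
  intro t
  simp only [WithTop.coe_le_coe]
  by_cases htk : (k : ℝ≥0) ≤ t
  · have : {ω | sdy K v k ω ≤ t} = Set.univ :=
      Set.eq_univ_of_forall fun ω => (sdy_le v k ω).trans htk
    rw [this]
    exact MeasurableSet.univ
  · push_neg at htk
    set g : ℝ≥0 := dy k ⌊(t:ℝ) * 2 ^ k⌋₊ with hg
    have hgt : g ≤ t := fl_le k t
    have hset : {ω | sdy K v k ω ≤ t} = {ω | v ≤ K g ω} := by
      ext ω
      simp only [Set.mem_setOf_eq]
      rw [← hitTime_le_iff hKmono hKrc v ω g]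
      constructor
      · intro h
        rw [sdy] at h
        split_ifs at h with hfin
        · have hne : hitTime K v ω ≠ ⊤ := fun hh => by
            rw [hh] at hfin
            exact ENNReal.coe_ne_top (top_le_iff.1 hfin)
          have hcle : cdy k ((hitTime K v ω).toNNReal) ≤ g := le_fl h
          calc hitTime K v ω = ((hitTime K v ω).toNNReal : ℝ≥0∞) :=
                (ENNReal.coe_toNNReal hne).symm
            _ ≤ (cdy k ((hitTime K v ω).toNNReal) : ℝ≥0∞) := by
                exact_mod_cast le_cdy k _
            _ ≤ (g : ℝ≥0∞) := by exact_mod_cast hcle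
        · exact absurd (h.trans_lt htk) (lt_irrefl _)
      · intro h
        have hle : hitTime K v ω ≤ (k : ℝ≥0) :=
          h.trans (by exact_mod_cast hgt.trans htk.le)
        rw [sdy, if_pos hle]
        have hxg : (hitTime K v ω).toNNReal ≤ g := by
          have hne : hitTime K v ω ≠ ⊤ := (h.trans_lt ENNReal.coe_lt_top).ne
          rw [← ENNReal.coe_le_coe, ENNReal.coe_toNNReal hne]
          exact h
        calc cdy k ((hitTime K v ω).toNNReal) ≤ cdy k g := cdy_monotone k hxg
          _ = g := by rw [hg]; exact cdy_dy k _
          _ ≤ t := hgt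
    rw [hset]
    have : {ω | v ≤ K g ω} = K g ⁻¹' Set.Ici v := rfl
    refine ℱ.mono hgt _ ?_
    rw [this]
    exact (hKad g) measurableSet_Ici

lemma measurable_stoppedValue_finite {M : ℝ≥0 → Ω → ℝ} (hMm : ∀ d, Measurable (M d))
    {s : Ω → ℝ≥0} (hsm : Measurable s) (S : Finset ℝ≥0) (hS : ∀ ω, s ω ∈ S) :
    Measurable fun ω => M (s ω) ω := by
  rw [show (fun ω => M (s ω) ω) = fun ω => ∑ d ∈ S, Set.indicator {ω' | s ω' = d} (M d) ω from
    funext (stoppedValue_sum_repr S hS)]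
  refine Finset.measurable_sum _ fun d _ => ?_
  exact (hMm d).indicator (hsm (measurableSet_singleton d))

lemma measurable_sdy (hKad : Adapted ℱ K)
    (hKmono : ∀ ω, Monotone fun t => K t ω)
    (hKrc : ∀ ω t, ContinuousWithinAt (fun s => K s ω) (Set.Ici t) t)
    (v : ℝ) (k : ℕ) : Measurable (sdy K v k) := by
  refine measurable_of_Iic fun t => ?_
  have := sdy_isStoppingTime hKad hKmono hKrc v k t
  simp only [WithTop.coe_le_coe] at this
  exact ℱ.le t _ this

/-- The key supermartingale bound: `E[L_{η_v} ; v < K_∞] ≤ 1`. -/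
lemma star_bound (hKad : Adapted ℱ K)
    (hKmono : ∀ ω, Monotone fun t => K t ω)
    (hKrc : ∀ ω t, ContinuousWithinAt (fun s => K s ω) (Set.Ici t) t)
    (hK1 : ∀ t ω, K t ω ≤ 1)
    (hL0 : ∀ t ω, 0 ≤ L t ω) (hLinit : ∀ᵐ ω ∂P, L 0 ω = 1)
    (hLloc : IsLocalMartingale ℱ P L) (v : ℝ) :
    ∫⁻ ω, (if v < Ksup K ω then dyad L (etaT K v ω, ω) else 0) ∂P ≤ 1 := by
  obtain ⟨hLad, hLrc, τ, hτst, hτmono, hτtop, hτmart⟩ := hLloc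
  have hLm : ∀ d, Measurable (L d) := fun d => (hLad d).mono (ℱ.le d) le_rfl
  -- Step 1 : for every k and n, the integral of the stopped martingale at `sdy` is 1
  have step1 : ∀ k n : ℕ,
      ∫ ω, MeasureTheory.stoppedProcess L (fun ω => ((τ n ω : ℝ≥0) : WithTop ℝ≥0)) (sdy K v k ω) ω ∂P = 1 := by
    intro k n
    set M := MeasureTheory.stoppedProcess L (fun ω => ((τ n ω : ℝ≥0) : WithTop ℝ≥0)) with hM
    have h1 := integral_stoppedValue_finite_range (hτmart n)
      (sdy_isStoppingTime hKad hKmono hKrc v k) _ (sdy_mem v k) (fun d hd => sdy_bound hd)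
    rw [h1.2]
    have h2 : ∫ ω, M k ω ∂P = ∫ ω, M 0 ω ∂P := by
      rw [← MeasureTheory.integral_condExp (ℱ.le 0) (f := M (k : ℝ≥0)) (μ := P)]
      exact integral_congr_ae ((hτmart n).2 0 k (zero_le))
    rw [h2]
    have h3 : ∀ ω, M 0 ω = L 0 ω := by
      intro ω
      rw [hM]; exact stoppedProcess_eq_of_le (WithTop.coe_le_coe.2 zero_le)
    rw [show (fun ω => M 0 ω) = L 0 from funext h3]
    rw [integral_congr_ae hLinit]
    simp
  -- Step 2 : Fatou in n
  have step2 : ∀ k : ℕ, ∫⁻ ω, ENNReal.ofReal (L (sdy K v k ω) ω) ∂P ≤ 1 := by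
    intro k
    have hmeasn : ∀ n : ℕ, Measurable fun ω =>
        ENNReal.ofReal (MeasureTheory.stoppedProcess L (fun ω => ((τ n ω : ℝ≥0) : WithTop ℝ≥0)) (sdy K v k ω) ω) := by
      intro n
      refine Measurable.ennreal_ofReal ?_
      exact measurable_stoppedValue_finite
        (fun d => (((hτmart n).stronglyAdapted d).mono (ℱ.le d)).measurable)
        (measurable_sdy hKad hKmono hKrc v k) _ (sdy_mem v k)
    have hpt : ∀ ω, Tendsto
        (fun n => ENNReal.ofReal (MeasureTheory.stoppedProcess L (fun ω => ((τ n ω : ℝ≥0) : WithTop ℝ≥0)) (sdy K v k ω) ω))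
        atTop (𝓝 (ENNReal.ofReal (L (sdy K v k ω) ω))) := by
      intro ω
      refine Filter.Tendsto.congr' ?_ tendsto_const_nhds
      filter_upwards [(hτtop ω).eventually_ge_atTop (k : ℝ≥0)] with n hn
      rw [stoppedProcess_eq_of_le (by exact_mod_cast (sdy_le v k ω).trans hn)]
    calc ∫⁻ ω, ENNReal.ofReal (L (sdy K v k ω) ω) ∂P
        = ∫⁻ ω, Filter.liminf (fun n =>
            ENNReal.ofReal (MeasureTheory.stoppedProcess L (fun ω => ((τ n ω : ℝ≥0) : WithTop ℝ≥0)) (sdy K v k ω) ω)) atTop ∂P := by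
          refine lintegral_congr fun ω => ?_
          exact ((hpt ω).liminf_eq).symm
      _ ≤ Filter.liminf (fun n => ∫⁻ ω,
            ENNReal.ofReal (MeasureTheory.stoppedProcess L (fun ω => ((τ n ω : ℝ≥0) : WithTop ℝ≥0)) (sdy K v k ω) ω) ∂P) atTop :=
          MeasureTheory.lintegral_liminf_le hmeasn
      _ ≤ 1 := by
          have heq : ∀ n : ℕ, ∫⁻ ω,
              ENNReal.ofReal (MeasureTheory.stoppedProcess L (fun ω => ((τ n ω : ℝ≥0) : WithTop ℝ≥0)) (sdy K v k ω) ω) ∂P = 1 := by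
            intro n
            have hint := (integral_stoppedValue_finite_range (hτmart n)
              (sdy_isStoppingTime hKad hKmono hKrc v k) _ (sdy_mem v k)
              (fun d hd => sdy_bound hd)).1
            rw [← MeasureTheory.ofReal_integral_eq_lintegral_ofReal hint
              (Filter.Eventually.of_forall fun ω => hL0 _ ω), step1 k n]
            simp
          rw [show (fun n => ∫⁻ ω, ENNReal.ofReal
              (MeasureTheory.stoppedProcess L (fun ω => ((τ n ω : ℝ≥0) : WithTop ℝ≥0)) (sdy K v k ω) ω) ∂P) = fun _ => (1:ℝ≥0∞) from
            funext heq]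
          simp [Filter.liminf_const]
  -- Step 3 : Fatou in k
  have hptk : ∀ᵐ ω ∂P, (if v < Ksup K ω then dyad L (etaT K v ω, ω) else 0)
      ≤ Filter.liminf (fun k => ENNReal.ofReal (L (sdy K v k ω) ω)) atTop := by
    filter_upwards [hLrc] with ω hω
    split_ifs with hv
    · have hfin : hitTime K v ω ≠ ⊤ := hitTime_ne_top hKmono hKrc hK1 hv
      obtain ⟨n₀, hn₀⟩ := (lt_Ksup_iff hK1).1 hv
      have hev : ∀ᶠ k : ℕ in atTop, sdy K v k ω = cdy k (etaT K v ω) := by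
        filter_upwards [Filter.eventually_ge_atTop n₀] with k hk
        rw [sdy, if_pos]
        · rfl
        · calc hitTime K v ω ≤ (n₀ : ℝ≥0) := (hitTime_le_iff hKmono hKrc v ω n₀).2 hn₀.le
            _ ≤ ((k : ℝ≥0) : ℝ≥0∞) := by exact_mod_cast hk
      have htd : Tendsto (fun k => ENNReal.ofReal (L (cdy k (etaT K v ω)) ω)) atTop
          (𝓝 (ENNReal.ofReal (L (etaT K v ω) ω))) :=
        (ENNReal.continuous_ofReal.tendsto _).comp
          ((hω.1 (etaT K v ω)).tendsto.comp (tendsto_cdy_within _))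
      have : Tendsto (fun k => ENNReal.ofReal (L (sdy K v k ω) ω)) atTop
          (𝓝 (ENNReal.ofReal (L (etaT K v ω) ω))) := by
        refine Filter.Tendsto.congr' ?_ htd
        filter_upwards [hev] with k hk
        rw [hk]
      rw [this.liminf_eq, dyad_eq (hω.1 (etaT K v ω))]
    · exact zero_le
  have hmeask : ∀ k : ℕ, Measurable fun ω => ENNReal.ofReal (L (sdy K v k ω) ω) := by
    intro k
    exact (measurable_stoppedValue_finite hLm
      (measurable_sdy hKad hKmono hKrc v k) _ (sdy_mem v k)).ennreal_ofReal
  calc ∫⁻ ω, (if v < Ksup K ω then dyad L (etaT K v ω, ω) else 0) ∂P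
      ≤ ∫⁻ ω, Filter.liminf (fun k => ENNReal.ofReal (L (sdy K v k ω) ω)) atTop ∂P :=
        lintegral_mono_ae hptk
    _ ≤ Filter.liminf (fun k => ∫⁻ ω, ENNReal.ofReal (L (sdy K v k ω) ω) ∂P) atTop :=
        MeasureTheory.lintegral_liminf_le hmeask
    _ ≤ 1 := by
        refine Filter.liminf_le_of_le ?_ ?_
        · exact ⟨0, Filter.Eventually.of_forall fun k => zero_le⟩
        · intro b hb
          obtain ⟨k, hk⟩ := hb.exists
          exact hk.trans (step2 k)

end Star

end RandTimes
namespace RandTimes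

section TC

variable {Ω : Type*} {m : MeasurableSpace Ω} {K : ℝ≥0 → Ω → ℝ}

lemma time_change_Ico01 (hmono : ∀ ω, Monotone fun t => K t ω)
    (hrc : ∀ ω t, ContinuousWithinAt (fun s => K s ω) (Set.Ici t) t)
    (h0 : ∀ t ω, 0 ≤ K t ω) (hb : ∀ t ω, K t ω ≤ 1)
    {κ : Measure ℝ≥0} {ω : Ω} (hκ : ∀ t, κ (Set.Iic t) = ENNReal.ofReal (K t ω))
    {h : ℝ≥0 → ℝ≥0∞} (hh : Measurable h) :
    ∫⁻ t, h t ∂κ = ∫⁻ v in Set.Ico (0 : ℝ) 1,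
      (if v < Ksup K ω then h (etaT K v ω) else 0) ∂MeasureTheory.volume := by
  rw [lintegral_kappa hmono hrc h0 hb hκ hh]
  have hind : ∀ v : ℝ, (if v < Ksup K ω then h (etaT K v ω) else 0)
      = (Set.Iio (Ksup K ω)).indicator (fun v => h (etaT K v ω)) v := by
    intro v
    rw [Set.indicator_apply]
    rfl
  rw [lintegral_congr hind, MeasureTheory.lintegral_indicator measurableSet_Iio,
    MeasureTheory.Measure.restrict_restrict measurableSet_Iio]
  congr 1
  have : Set.Iio (Ksup K ω) ∩ Set.Ico (0:ℝ) 1 = Set.Ico (0:ℝ) (Ksup K ω) := by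
    ext v
    simp only [Set.mem_inter_iff, Set.mem_Iio, Set.mem_Ico]
    constructor
    · rintro ⟨h1, h2, _⟩; exact ⟨h2, h1⟩
    · rintro ⟨h1, h2⟩
      exact ⟨h2, h1, h2.trans_le (Ksup_le_one hb ω)⟩
  rw [this]

end TC

end RandTimes

namespace RandTimes

/-- Proposition: uniform stochastic domination.
For the canonical pair `(K, L)` of a random time `ρ`, and every nondecreasing
`f : [0,1) → ℝ` (formalized as a function monotone on `[0,1]`, since `K` takes values
in `[0,1]`): `E_P[f(K_{ρ-})] ≤ ∫_{[0,1)} f(u) du ≤ E_P[f(K_ρ)]`. That is, the law of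
`K_{ρ-}` is first-order dominated by the standard uniform law, which in turn is
first-order dominated by the law of `K_ρ`. -/
theorem K_at_random_time_dominates_uniform
    {Ω : Type*} {m : MeasurableSpace Ω}
    (ℱ : Filtration ℝ≥0 m) (hℱ : RightContFiltration ℱ)
    (P : Measure Ω) [IsProbabilityMeasure P]
    (ρ : Ω → ℝ≥0∞) (hρmeas : Measurable ρ) (hρfin : ∀ᵐ ω ∂P, ρ ω < ⊤)
    (K L : ℝ≥0 → Ω → ℝ) (κ : Ω → Measure ℝ≥0)
    (hpair : IsCanonicalPair ℱ P ρ K L κ)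
    (f : ℝ → ℝ) (hf : MonotoneOn f (Set.Icc (0:ℝ) 1)) :
    (∫ ω, f (llim (fun s => K s ω) (ρ ω).toNNReal) ∂P ≤ ∫ u in Set.Ico (0:ℝ) 1, f u) ∧
    (∫ u in Set.Ico (0:ℝ) 1, f u ≤ ∫ ω, f (evalT K ρ ω) ∂P) := by
  classical
  -- shorthand
  have hKad := hpair.K_adapted
  have hKrc := hpair.K_rc
  have hKmono := hpair.K_mono
  have hK0 := hpair.K_nonneg
  have hK1 := hpair.K_le_one
  have hκeq := hpair.kappa_eq
  have hL0 := hpair.L_nonneg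
  have hKm : ∀ t, Measurable (K t) := fun t => (hKad t).mono (ℱ.le t) le_rfl
  have hLm : ∀ t, Measurable (L t) := fun t => (hpair.L_locMart.1 t).mono (ℱ.le t) le_rfl
  have hLrc := hpair.L_locMart.2.1
  -- the normalized nondecreasing function `gg`
  set gg : ℝ → ℝ := fun x => f (max 0 (min x 1)) - f 0 with hggdef
  have hclamp : ∀ x : ℝ, max 0 (min x 1) ∈ Set.Icc (0:ℝ) 1 := fun x =>
    ⟨le_max_left _ _, max_le zero_le_one (min_le_right _ _)⟩
  have hclamp_eq : ∀ x ∈ Set.Icc (0:ℝ) 1, max 0 (min x 1) = x := fun x hx => by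
    rw [min_eq_left hx.2, max_eq_right hx.1]
  have hggmono : Monotone gg := by
    intro a b hab
    exact sub_le_sub_right
      (hf (hclamp a) (hclamp b) (max_le_max le_rfl (min_le_min hab le_rfl))) _
  have hgg0 : ∀ x, 0 ≤ gg x := fun x =>
    sub_nonneg.2 (hf ⟨le_rfl, zero_le_one⟩ (hclamp x) (le_max_left _ _))
  have hggbd : ∀ x, gg x ≤ f 1 - f 0 := fun x =>
    sub_le_sub_right (hf (hclamp x) ⟨zero_le_one, le_rfl⟩
      (max_le zero_le_one (min_le_right _ _))) _
  have hggeq : ∀ x ∈ Set.Icc (0:ℝ) 1, f x = gg x + f 0 := fun x hx => by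
    simp [hggdef, hclamp_eq x hx]
  have hggm : Measurable gg := hggmono.measurable
  -- the kernel `G` and the function `I`
  set G : ℝ → Ω → ℝ≥0∞ :=
    fun v ω => if v < Ksup K ω then dyad L (etaT K v ω, ω) else 0 with hGdef
  have hGmeas : Measurable (fun q : Ω × ℝ => G q.2 q.1) := by
    refine Measurable.ite ?_ ?_ measurable_const
    · exact measurableSet_lt measurable_snd ((measurable_Ksup hKm hK0 hK1).comp measurable_fst)
    · exact (measurable_dyad hLm).comp
        (((measurable_etaT_prod hKmono hKrc hKm).comp
          (measurable_snd.prodMk measurable_fst)).prodMk measurable_fst)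
  have hGmeas' : Measurable (fun q : ℝ × Ω => G q.1 q.2) :=
    hGmeas.comp (measurable_snd.prodMk measurable_fst)
  have hGv : ∀ v, Measurable (G v) := fun v =>
    hGmeas.comp (measurable_id.prodMk measurable_const)
  have hGω : ∀ ω, Measurable fun v => G v ω := fun ω =>
    hGmeas.comp (measurable_const.prodMk measurable_id)
  set I : ℝ → ℝ≥0∞ := fun v => ∫⁻ ω, G v ω ∂P with hIdef
  have hImeas : Measurable I := Measurable.lintegral_prod_right' hGmeas'
  have hIle : ∀ v, I v ≤ 1 := fun v =>
    star_bound hKad hKmono hKrc hK1 hL0 hpair.L_init hpair.L_locMart v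
  -- `I` integrates to 1 over [0,1)
  have hvol : (MeasureTheory.volume.restrict (Set.Ico (0:ℝ) 1)) Set.univ = 1 := by
    rw [Measure.restrict_apply_univ, Real.volume_Ico]
    norm_num
  have hch1 : ∀ᵐ ω ∂P, (∫⁻ t, ENNReal.ofReal ((fun (_ : ℝ≥0) (_ : Ω) => (1:ℝ)) t ω * L t ω) ∂(κ ω))
      = ∫⁻ v in Set.Ico (0:ℝ) 1, G v ω ∂MeasureTheory.volume := by
    filter_upwards [hLrc] with ω hω
    have h1 : ∀ t, ENNReal.ofReal (1 * L t ω) = dyad L (t, ω) := fun t => by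
      rw [one_mul, dyad_eq (hω.1 t)]
    have hmeasdyad : Measurable fun t : ℝ≥0 => dyad L (t, ω) :=
      (measurable_dyad hLm).comp (measurable_id.prodMk measurable_const)
    calc ∫⁻ t, ENNReal.ofReal (1 * L t ω) ∂(κ ω)
        = ∫⁻ t, dyad L (t, ω) ∂(κ ω) := lintegral_congr h1
      _ = ∫⁻ v in Set.Ico (0:ℝ) 1,
            (if v < Ksup K ω then (fun t : ℝ≥0 => dyad L (t, ω)) (etaT K v ω) else 0)
            ∂MeasureTheory.volume :=
          time_change_Ico01 hKmono hKrc hK0 hK1 (hκeq ω) hmeasdyad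
      _ = ∫⁻ v in Set.Ico (0:ℝ) 1, G v ω ∂MeasureTheory.volume := rfl
  have hswap : ∫⁻ ω, (∫⁻ v in Set.Ico (0:ℝ) 1, G v ω ∂MeasureTheory.volume) ∂P
      = ∫⁻ v in Set.Ico (0:ℝ) 1, I v ∂MeasureTheory.volume := by
    rw [MeasureTheory.lintegral_lintegral_swap (hGmeas.aemeasurable)]
  have hC : ∫⁻ v in Set.Ico (0:ℝ) 1, I v ∂MeasureTheory.volume = 1 := by
    have he := hpair.eval_eq (fun _ _ => 1) measurable_const (fun _ _ => zero_le_one)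
    have hlhs : ∫⁻ ω, ENNReal.ofReal (evalT (fun _ _ => 1) ρ ω) ∂P = 1 := by
      simp [evalT]
    rw [hlhs] at he
    rw [← hswap, ← lintegral_congr_ae hch1, ← he]
  have hIone : ∀ᵐ v ∂(MeasureTheory.volume.restrict (Set.Ico (0:ℝ) 1)), I v = 1 := by
    have hfin : ∫⁻ v in Set.Ico (0:ℝ) 1, I v ∂MeasureTheory.volume ≠ ⊤ := by
      rw [hC]; exact ENNReal.one_ne_top
    have hsub : ∫⁻ v in Set.Ico (0:ℝ) 1, ((1:ℝ≥0∞) - I v) ∂MeasureTheory.volume = 0 := by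
      rw [MeasureTheory.lintegral_sub hImeas hfin
        (Filter.Eventually.of_forall fun v => hIle v)]
      rw [hC, MeasureTheory.lintegral_one, hvol, tsub_self]
    have h0' := (MeasureTheory.lintegral_eq_zero_iff
      (measurable_const.sub hImeas)).1 hsub
    filter_upwards [h0'] with v hv
    exact le_antisymm (hIle v) (tsub_eq_zero_iff_le.1 hv)
  -- weighted swap
  have hswapG : ∫⁻ ω, (∫⁻ v in Set.Ico (0:ℝ) 1,
        ENNReal.ofReal (gg v) * G v ω ∂MeasureTheory.volume) ∂P
      = ∫⁻ v in Set.Ico (0:ℝ) 1, ENNReal.ofReal (gg v) * I v ∂MeasureTheory.volume := by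
    rw [MeasureTheory.lintegral_lintegral_swap
      (f := fun ω v => ENNReal.ofReal (gg v) * G v ω)
      ((((hggm.comp measurable_snd).ennreal_ofReal).mul hGmeas).aemeasurable)]
    refine lintegral_congr fun v => ?_
    rw [MeasureTheory.lintegral_const_mul _ (hGv v)]
  -- Chain A
  have hchA : ∀ᵐ ω ∂P, (∫⁻ v in Set.Ico (0:ℝ) 1,
        ENNReal.ofReal (gg v) * G v ω ∂MeasureTheory.volume)
      ≤ ∫⁻ t, ENNReal.ofReal ((fun t ω' => gg (K t ω')) t ω * L t ω) ∂(κ ω) := by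
    filter_upwards [hLrc] with ω hω
    have h1 : ∀ t, ENNReal.ofReal ((fun t ω' => gg (K t ω')) t ω * L t ω)
        = (fun t : ℝ≥0 => ENNReal.ofReal (gg (K t ω)) * dyad L (t, ω)) t := fun t => by
      simp only
      rw [ENNReal.ofReal_mul (hgg0 _), dyad_eq (hω.1 t)]
    have hmeas_h : Measurable fun t : ℝ≥0 => ENNReal.ofReal (gg (K t ω)) * dyad L (t, ω) :=
      ((hggmono.comp (hKmono ω)).measurable.ennreal_ofReal).mul
        ((measurable_dyad hLm).comp (measurable_id.prodMk measurable_const))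
    calc ∫⁻ v in Set.Ico (0:ℝ) 1, ENNReal.ofReal (gg v) * G v ω ∂MeasureTheory.volume
        ≤ ∫⁻ v in Set.Ico (0:ℝ) 1, (if v < Ksup K ω then
            (fun t : ℝ≥0 => ENNReal.ofReal (gg (K t ω)) * dyad L (t, ω)) (etaT K v ω) else 0)
            ∂MeasureTheory.volume := by
          refine lintegral_mono fun v => ?_
          by_cases hv : v < Ksup K ω
          · simp only [hGdef, if_pos hv]
            refine mul_le_mul_left (ENNReal.ofReal_le_ofReal (hggmono ?_)) _
            exact le_K_etaT hKmono hKrc (hitTime_ne_top hKmono hKrc hK1 hv)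
          · simp [hGdef, hv]
      _ = ∫⁻ t, (fun t : ℝ≥0 => ENNReal.ofReal (gg (K t ω)) * dyad L (t, ω)) t ∂(κ ω) :=
          (time_change_Ico01 hKmono hKrc hK0 hK1 (hκeq ω) hmeas_h).symm
      _ = _ := (lintegral_congr h1).symm
  have hA : ∫⁻ v in Set.Ico (0:ℝ) 1, ENNReal.ofReal (gg v) ∂MeasureTheory.volume
      ≤ ∫⁻ ω, ENNReal.ofReal (gg (evalT K ρ ω)) ∂P := by
    have heA := hpair.eval_eq (fun t ω' => gg (K t ω'))
      (hggm.comp (measurable_optional_of_mem hKad hKrc)) (fun t ω' => hgg0 _)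
    calc ∫⁻ v in Set.Ico (0:ℝ) 1, ENNReal.ofReal (gg v) ∂MeasureTheory.volume
        = ∫⁻ v in Set.Ico (0:ℝ) 1, ENNReal.ofReal (gg v) * I v ∂MeasureTheory.volume := by
          refine lintegral_congr_ae ?_
          filter_upwards [hIone] with v hv
          rw [hv, mul_one]
      _ = ∫⁻ ω, (∫⁻ v in Set.Ico (0:ℝ) 1,
            ENNReal.ofReal (gg v) * G v ω ∂MeasureTheory.volume) ∂P := hswapG.symm
      _ ≤ ∫⁻ ω, (∫⁻ t, ENNReal.ofReal ((fun t ω' => gg (K t ω')) t ω * L t ω) ∂(κ ω)) ∂P :=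
          lintegral_mono_ae hchA
      _ = ∫⁻ ω, ENNReal.ofReal (evalT (fun t ω' => gg (K t ω')) ρ ω) ∂P := heA.symm
      _ = ∫⁻ ω, ENNReal.ofReal (gg (evalT K ρ ω)) ∂P := rfl
  -- the left-limit process
  set V2 : ℝ≥0 → Ω → ℝ := fun t ω' => if t = 0 then gg 0
    else gg ((⨆ n : ℕ, ENNReal.ofReal (K (t - ((n:ℝ≥0)+1)⁻¹) ω')).toReal) with hV2def
  have hV2eq : ∀ ω t, V2 t ω = gg (llim (fun s => K s ω) t) := by
    intro ω t
    rcases eq_or_ne t 0 with rfl | ht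
    · simp [hV2def, llim]
    · simp only [hV2def, if_neg ht]
      rw [llim_eq_iSup_shift (hKmono ω) (fun s => hK0 s ω) ht]
  have hV2nonneg : ∀ t ω', 0 ≤ V2 t ω' := fun t ω' => by
    rw [hV2eq ω' t]; exact hgg0 _
  have hoptV2 : IsOptional ℱ V2 := by
    show @Measurable _ _ (optionalSigma ℱ) _ fun p : ℝ≥0 × Ω => V2 p.1 p.2
    have hrepr : (fun p : ℝ≥0 × Ω => V2 p.1 p.2) = fun p : ℝ≥0 × Ω =>
        if p.1 = 0 then gg 0
        else gg ((⨆ n : ℕ, ENNReal.ofReal (K (p.1 - ((n:ℝ≥0)+1)⁻¹) p.2)).toReal) := rfl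
    rw [hrepr]
    refine Measurable.ite measurableSet_zero_time measurable_const ?_
    exact hggm.comp (Measurable.ennreal_toReal
      (Measurable.iSup fun n => (optional_K hKad hKrc _).ennreal_ofReal))
  have hllmono : ∀ ω, Monotone fun t => llim (fun s => K s ω) t := by
    intro ω a b hab
    show llim (fun s => K s ω) a ≤ llim (fun s => K s ω) b
    rcases eq_or_ne a 0 with rfl | ha
    · have h0 : llim (fun s => K s ω) 0 = 0 := by simp [llim]
      rw [h0]
      exact llim_nonneg (hKmono ω) (fun s => hK0 s ω) b
    · refine llim_le (hKmono ω) (llim_nonneg (hKmono ω) (fun s => hK0 s ω) b) ?_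
      intro s hs
      have hsb : s < b := hs.trans_le hab
      have hb0 : b ≠ 0 := fun hb0 => ha (le_antisymm (hab.trans hb0.le) zero_le)
      have hLL : llim (fun s => K s ω) b = Function.leftLim (fun s => K s ω) b := by
        simp [llim, hb0]
      rw [hLL]
      exact (hKmono ω).le_leftLim hsb
  -- Chain B
  have hchB : ∀ᵐ ω ∂P, (∫⁻ t, ENNReal.ofReal (V2 t ω * L t ω) ∂(κ ω))
      ≤ ∫⁻ v in Set.Ico (0:ℝ) 1, ENNReal.ofReal (gg v) * G v ω ∂MeasureTheory.volume := by
    filter_upwards [hLrc] with ω hω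
    have h1 : ∀ t, ENNReal.ofReal (V2 t ω * L t ω)
        = (fun t : ℝ≥0 => ENNReal.ofReal (gg (llim (fun s => K s ω) t)) * dyad L (t, ω)) t :=
      fun t => by
        simp only
        rw [hV2eq ω t, ENNReal.ofReal_mul (hgg0 _), dyad_eq (hω.1 t)]
    have hmeas_h : Measurable fun t : ℝ≥0 =>
        ENNReal.ofReal (gg (llim (fun s => K s ω) t)) * dyad L (t, ω) :=
      ((hggmono.comp (hllmono ω)).measurable.ennreal_ofReal).mul
        ((measurable_dyad hLm).comp (measurable_id.prodMk measurable_const))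
    calc ∫⁻ t, ENNReal.ofReal (V2 t ω * L t ω) ∂(κ ω)
        = ∫⁻ v in Set.Ico (0:ℝ) 1, (if v < Ksup K ω then
            (fun t : ℝ≥0 => ENNReal.ofReal (gg (llim (fun s => K s ω) t)) * dyad L (t, ω))
              (etaT K v ω) else 0) ∂MeasureTheory.volume := by
          rw [lintegral_congr h1]
          exact time_change_Ico01 hKmono hKrc hK0 hK1 (hκeq ω) hmeas_h
      _ ≤ ∫⁻ v in Set.Ico (0:ℝ) 1,
            ENNReal.ofReal (gg v) * G v ω ∂MeasureTheory.volume := by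
          refine lintegral_mono_ae ?_
          filter_upwards [MeasureTheory.ae_restrict_mem measurableSet_Ico] with v hv01
          by_cases hv : v < Ksup K ω
          · simp only [hGdef, if_pos hv]
            refine mul_le_mul_left (ENNReal.ofReal_le_ofReal (hggmono ?_)) _
            refine llim_le (hKmono ω) hv01.1 ?_
            intro s hs
            exact (K_lt_of_lt_etaT hKmono hKrc hs).le
          · simp [hGdef, hv]
  have hB : ∫⁻ ω, ENNReal.ofReal (gg (llim (fun s => K s ω) (ρ ω).toNNReal)) ∂P
      ≤ ∫⁻ v in Set.Ico (0:ℝ) 1, ENNReal.ofReal (gg v) ∂MeasureTheory.volume := by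
    have heB := hpair.eval_eq V2 hoptV2 hV2nonneg
    have hlhs : ∫⁻ ω, ENNReal.ofReal (evalT V2 ρ ω) ∂P
        = ∫⁻ ω, ENNReal.ofReal (gg (llim (fun s => K s ω) (ρ ω).toNNReal)) ∂P :=
      lintegral_congr fun ω => by rw [evalT, hV2eq]
    calc ∫⁻ ω, ENNReal.ofReal (gg (llim (fun s => K s ω) (ρ ω).toNNReal)) ∂P
        = ∫⁻ ω, (∫⁻ t, ENNReal.ofReal (V2 t ω * L t ω) ∂(κ ω)) ∂P := by
          rw [← heB, hlhs]
      _ ≤ ∫⁻ ω, (∫⁻ v in Set.Ico (0:ℝ) 1,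
            ENNReal.ofReal (gg v) * G v ω ∂MeasureTheory.volume) ∂P := lintegral_mono_ae hchB
      _ = ∫⁻ v in Set.Ico (0:ℝ) 1,
            ENNReal.ofReal (gg v) * I v ∂MeasureTheory.volume := hswapG
      _ ≤ ∫⁻ v in Set.Ico (0:ℝ) 1, ENNReal.ofReal (gg v) ∂MeasureTheory.volume :=
          lintegral_mono fun v => (mul_le_mul_right (hIle v) _).trans_eq (mul_one _)
  -- measurability of evaluated processes
  have hX1meas : Measurable fun ω => evalT K ρ ω := by
    have h1 : ∀ ω, evalT K ρ ω = (dyad K ((ρ ω).toNNReal, ω)).toReal := by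
      intro ω
      rw [evalT, dyad_eq (hKrc ω _), ENNReal.toReal_ofReal (hK0 _ ω)]
    rw [show (fun ω => evalT K ρ ω) = fun ω => (dyad K ((ρ ω).toNNReal, ω)).toReal
      from funext h1]
    exact ((measurable_dyad hKm).comp
      ((hρmeas.ennreal_toNNReal).prodMk measurable_id)).ennreal_toReal
  have hX2meas : Measurable fun ω => llim (fun s => K s ω) (ρ ω).toNNReal := by
    have h1 : ∀ ω, llim (fun s => K s ω) (ρ ω).toNNReal
        = (⨆ q : ℚ, if Real.toNNReal q < (ρ ω).toNNReal
            then ENNReal.ofReal (K (Real.toNNReal q) ω) else 0).toReal :=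
      fun ω => llim_eq_iSup_rat (hKmono ω) (fun s => hK0 s ω) _
    rw [show (fun ω => llim (fun s => K s ω) (ρ ω).toNNReal)
      = fun ω => (⨆ q : ℚ, if Real.toNNReal q < (ρ ω).toNNReal
          then ENNReal.ofReal (K (Real.toNNReal q) ω) else 0).toReal from funext h1]
    refine Measurable.ennreal_toReal (Measurable.iSup fun q => ?_)
    refine Measurable.ite ?_ ((hKm _).ennreal_ofReal) measurable_const
    exact measurableSet_lt measurable_const hρmeas.ennreal_toNNReal
  have hX1mem : ∀ ω, evalT K ρ ω ∈ Set.Icc (0:ℝ) 1 := fun ω => ⟨hK0 _ ω, hK1 _ ω⟩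
  have hX2mem : ∀ ω, llim (fun s => K s ω) (ρ ω).toNNReal ∈ Set.Icc (0:ℝ) 1 := fun ω =>
    ⟨llim_nonneg (hKmono ω) (fun s => hK0 s ω) _,
     (llim_le_self (hKmono ω) (fun s => hK0 s ω) _).trans (hK1 _ ω)⟩
  -- Bochner conversions
  have hconv : ∀ X : Ω → ℝ, Measurable X → (∀ ω, X ω ∈ Set.Icc (0:ℝ) 1) →
      ∫ ω, f (X ω) ∂P = (∫⁻ ω, ENNReal.ofReal (gg (X ω)) ∂P).toReal + f 0 := by
    intro X hXm hXmem
    have h1 : (fun ω => f (X ω)) = fun ω => gg (X ω) + f 0 :=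
      funext fun ω => hggeq _ (hXmem ω)
    have hint : Integrable (fun ω => gg (X ω)) P := by
      refine MeasureTheory.Integrable.mono' (integrable_const (f 1 - f 0))
        ((hggm.comp hXm).aestronglyMeasurable) ?_
      refine Filter.Eventually.of_forall fun ω => ?_
      rw [Real.norm_eq_abs, abs_of_nonneg (hgg0 _)]
      exact hggbd _
    rw [h1, MeasureTheory.integral_add hint (integrable_const _), integral_const]
    simp only [measureReal_def, measure_univ, ENNReal.toReal_one, one_smul]
    congr 1
    rw [MeasureTheory.integral_eq_lintegral_of_nonneg_ae
      (Filter.Eventually.of_forall fun ω => hgg0 _) ((hggm.comp hXm).aestronglyMeasurable)]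
  have hunif : ∫ u in Set.Ico (0:ℝ) 1, f u
      = (∫⁻ v in Set.Ico (0:ℝ) 1, ENNReal.ofReal (gg v) ∂MeasureTheory.volume).toReal
        + f 0 := by
    have h1 : ∫ u in Set.Ico (0:ℝ) 1, f u
        = ∫ u in Set.Ico (0:ℝ) 1, (gg u + f 0) ∂MeasureTheory.volume := by
      refine MeasureTheory.setIntegral_congr_fun measurableSet_Ico fun u hu => ?_
      exact hggeq u ⟨hu.1, hu.2.le⟩
    have hint : Integrable gg (MeasureTheory.volume.restrict (Set.Ico (0:ℝ) 1)) := by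
      haveI : IsFiniteMeasure (MeasureTheory.volume.restrict (Set.Ico (0:ℝ) 1)) :=
        ⟨by rw [hvol]; exact ENNReal.one_lt_top⟩
      refine MeasureTheory.Integrable.mono' (integrable_const (f 1 - f 0))
        hggm.aestronglyMeasurable ?_
      refine Filter.Eventually.of_forall fun u => ?_
      rw [Real.norm_eq_abs, abs_of_nonneg (hgg0 _)]
      exact hggbd _
    haveI : IsFiniteMeasure (MeasureTheory.volume.restrict (Set.Ico (0:ℝ) 1)) :=
      ⟨by rw [hvol]; exact ENNReal.one_lt_top⟩
    rw [h1, MeasureTheory.integral_add hint (integrable_const _), integral_const]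
    rw [measureReal_def, hvol]
    simp only [ENNReal.toReal_one, one_smul]
    congr 1
    rw [MeasureTheory.integral_eq_lintegral_of_nonneg_ae
      (Filter.Eventually.of_forall fun u => hgg0 _) hggm.aestronglyMeasurable]
  -- finiteness
  have hJfin : ∫⁻ v in Set.Ico (0:ℝ) 1, ENNReal.ofReal (gg v) ∂MeasureTheory.volume ≠ ⊤ := by
    have h1 : ∫⁻ v in Set.Ico (0:ℝ) 1, ENNReal.ofReal (gg v) ∂MeasureTheory.volume
        ≤ ∫⁻ _ in Set.Ico (0:ℝ) 1, ENNReal.ofReal (f 1 - f 0) ∂MeasureTheory.volume :=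
      lintegral_mono fun v => ENNReal.ofReal_le_ofReal (hggbd _)
    rw [MeasureTheory.lintegral_const, hvol, mul_one] at h1
    exact (h1.trans_lt ENNReal.ofReal_lt_top).ne
  have hAfin : ∫⁻ ω, ENNReal.ofReal (gg (evalT K ρ ω)) ∂P ≠ ⊤ := by
    have h1 : ∫⁻ ω, ENNReal.ofReal (gg (evalT K ρ ω)) ∂P
        ≤ ∫⁻ _, ENNReal.ofReal (f 1 - f 0) ∂P :=
      lintegral_mono fun ω => ENNReal.ofReal_le_ofReal (hggbd _)
    rw [MeasureTheory.lintegral_const, measure_univ, mul_one] at h1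
    exact (h1.trans_lt ENNReal.ofReal_lt_top).ne
  constructor
  · rw [hconv _ hX2meas hX2mem, hunif]
    have h2 := ENNReal.toReal_mono hJfin hB
    linarith
  · rw [hunif, hconv _ hX1meas hX1mem]
    have h2 := ENNReal.toReal_mono hAfin hA
    linarith

end RandTimes
end
end

section
/- In the finite-horizon discrete-time setting, let X be an adapted process such that P[X_t ≥ X_{t−1} | F_{t−1}] > 0 holds P-a.s. for all t ∈ 𝕋\{0}, and set ρ := max{t ∈ 𝕋 : X_t = max_{s∈𝕋} X_s}, the last time at which X attains its overall maximum. Let Q be the probability on (Ω, F) with density L_T with respect to P, where L is the discrete-time martingale L_0 = 1, L_t = L_{t−1} · P[ρ ≥ t | F_t] / P[ρ ≥ t | F_{t−1}] for t ≤ ζ₀ := min{t : P[ρ > t | F_t] = 0} and constant afterwards. Then Q[ρ = T] = 1. -/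
open MeasureTheory Filter Set ProbabilityTheory
open scoped ENNReal NNReal Topology

noncomputable section

namespace RandTimesDiscrete

private lemma chain_mono (f : ℕ → ℝ) :
    ∀ n, ∀ s, s ≤ n → (∀ u, s ≤ u → u < n → f u ≤ f (u + 1)) → f s ≤ f n := by
  intro n
  induction n with
  | zero =>
    intro s hs _
    have : s = 0 := Nat.le_zero.mp hs
    simp [this]
  | succ n ih =>
    intro s hs h
    rcases Nat.eq_or_lt_of_le hs with h' | h'
    · exact h' ▸ le_rfl
    · have hsn : s ≤ n := Nat.lt_succ_iff.mp h'
      exact le_trans (ih s hsn fun u hu hun => h u hu (Nat.lt_succ_of_lt hun))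
        (h n hsn (Nat.lt_succ_self n))

private lemma null_of_setIntegral_zero {Ω : Type*} {m : MeasurableSpace Ω}
    {P : Measure Ω} {f : Ω → ℝ} (hf : Integrable f P)
    (hpos : ∀ᵐ ω ∂P, 0 < f ω) {B : Set Ω} (hB : MeasurableSet B)
    (h0 : ∫ ω in B, f ω ∂P = 0) : P B = 0 := by
  by_contra hne
  have hBpos : 0 < P B := pos_iff_ne_zero.mpr hne
  have hsub : ∀ᵐ ω ∂P, ω ∈ B → ω ∈ Function.support f ∩ B :=
    hpos.mono fun ω h hB => ⟨ne_of_gt h, hB⟩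
  have hle : P B ≤ P (Function.support f ∩ B) := measure_mono_ae hsub
  have hpos2 : 0 < P (Function.support f ∩ B) := lt_of_lt_of_le hBpos hle
  have := (setIntegral_pos_iff_support_of_nonneg_ae
      (ae_restrict_of_ae (hpos.mono fun ω h => le_of_lt h)) hf.integrableOn).mpr hpos2
  rw [h0] at this
  exact lt_irrefl 0 this

private lemma setIntegral_indicator_one' {Ω : Type*} {m : MeasurableSpace Ω} (P : Measure Ω)
    {A : Set Ω} (B : Set Ω) (hA : MeasurableSet A) :
    ∫ ω in B, A.indicator (fun _ => (1 : ℝ)) ω ∂P = (P (A ∩ B)).toReal := by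
  rw [integral_indicator hA, setIntegral_const, smul_eq_mul, mul_one,
    measureReal_def, Measure.restrict_apply hA]

private lemma integrable_indicator_one'' {Ω : Type*} {m : MeasurableSpace Ω}
    (P : Measure Ω) [IsFiniteMeasure P] {A : Set Ω} (hA : MeasurableSet A) :
    Integrable (A.indicator fun _ => (1 : ℝ)) P :=
  (integrable_const (1 : ℝ)).indicator hA

/-- Key conditioning identity: integrating an indicator against a sub-σ-algebra
measurable nonnegative function can be done through the conditional expectation. -/
private lemma lintegral_indicator_mul_condexp {Ω : Type*} {m : MeasurableSpace Ω}
    (P : Measure Ω) [IsProbabilityMeasure P]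
    {F : MeasurableSpace Ω} (hF : F ≤ m) {A : Set Ω} (hA : MeasurableSet[m] A)
    {φ : Ω → ℝ≥0∞} (hφ : Measurable[F] φ) :
    ∫⁻ ω, A.indicator (fun _ => (1 : ℝ≥0∞)) ω * φ ω ∂P
      = ∫⁻ ω, ENNReal.ofReal ((P[A.indicator (fun _ => (1 : ℝ)) | F]) ω) * φ ω ∂P := by
  set f := P[A.indicator (fun _ => (1 : ℝ)) | F] with hfdef
  have hf_int : Integrable f P := integrable_condExp
  have hf_nn : 0 ≤ᵐ[P] f :=
    condExp_nonneg (Eventually.of_forall fun ω =>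
      Set.indicator_nonneg (fun _ _ => zero_le_one) ω)
  have hf_meas : Measurable[F] f := stronglyMeasurable_condExp.measurable
  have key : ∀ S : Set Ω, MeasurableSet[F] S →
      P.restrict A S = (P.withDensity fun ω => ENNReal.ofReal (f ω)) S := by
    intro S hS
    have hSm : MeasurableSet[m] S := hF S hS
    have hind : Integrable (A.indicator fun _ => (1 : ℝ)) P :=
      integrable_indicator_one'' P hA
    have e1 : ∫ ω in S, f ω ∂P = ∫ ω in S, A.indicator (fun _ => (1 : ℝ)) ω ∂P :=
      setIntegral_condExp hF hind hS
    have e2 : ∫ ω in S, A.indicator (fun _ => (1 : ℝ)) ω ∂P = (P (A ∩ S)).toReal :=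
      setIntegral_indicator_one' P S hA
    rw [Measure.restrict_apply hSm, withDensity_apply _ hSm,
      ← ofReal_integral_eq_lintegral_ofReal hf_int.restrict (ae_restrict_of_ae hf_nn),
      e1, e2, ENNReal.ofReal_toReal (measure_ne_top _ _), Set.inter_comm]
  have htrim : (P.restrict A).trim hF = (P.withDensity fun ω => ENNReal.ofReal (f ω)).trim hF :=
    Measure.ext fun S hS => by
      rw [trim_measurableSet_eq hF hS, trim_measurableSet_eq hF hS, key S hS]
  have h1 : ∫⁻ ω, A.indicator (fun _ => (1 : ℝ≥0∞)) ω * φ ω ∂P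
      = ∫⁻ ω, A.indicator φ ω ∂P := by
    refine lintegral_congr fun ω => ?_
    by_cases hω : ω ∈ A
    · simp [Set.indicator_of_mem hω]
    · simp [Set.indicator_of_notMem hω]
  have h2 : ∫⁻ ω, A.indicator φ ω ∂P = ∫⁻ ω, φ ω ∂(P.restrict A) :=
    lintegral_indicator hA φ
  have h3 : ∫⁻ ω, φ ω ∂(P.restrict A) = ∫⁻ ω, φ ω ∂((P.restrict A).trim hF) :=
    (lintegral_trim hF hφ).symm
  have h4 : ∫⁻ ω, φ ω ∂((P.withDensity fun ω => ENNReal.ofReal (f ω)).trim hF)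
      = ∫⁻ ω, φ ω ∂(P.withDensity fun ω => ENNReal.ofReal (f ω)) :=
    lintegral_trim hF hφ
  have h5 : ∫⁻ ω, φ ω ∂(P.withDensity fun ω => ENNReal.ofReal (f ω))
      = ∫⁻ ω, ENNReal.ofReal (f ω) * φ ω ∂P := by
    rw [lintegral_withDensity_eq_lintegral_mul _
      ((hf_meas.mono hF le_rfl).ennreal_ofReal) (hφ.mono hF le_rfl)]
    rfl
  rw [h1, h2, h3, htrim, h4, h5]

/-- Example: last time of maximum in discrete time becomes `T` under `Q`.
Finite-horizon discrete-time setting. Let `X` be adapted with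
`P[X_{t+1} ≥ X_t | 𝓕_t] > 0` a.s. for all `t < T`, and let `ρ` be the last time at which
`X` attains its overall maximum over `{0,…,T}`.  With `Z`, `ζ₀`, `L` and `dQ = L_T dP` as
in the canonical discrete-time construction, it holds that `Q[ρ = T] = 1`. -/
theorem last_time_of_maximum_discrete
    {Ω : Type*} {m : MeasurableSpace Ω}
    (ℱ : Filtration ℕ m) (P : Measure Ω) [IsProbabilityMeasure P] (T : ℕ)
    (U : Ω → ℝ) (hUmeas : Measurable U)
    (hUlaw : Measure.map U P = (volume : Measure ℝ).restrict (Set.Ico (0:ℝ) 1))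
    (hUindep : Indep (MeasurableSpace.comap U (inferInstance : MeasurableSpace ℝ)) (ℱ T) P)
    (hm : m = (ℱ T : MeasurableSpace Ω) ⊔
        MeasurableSpace.comap U (inferInstance : MeasurableSpace ℝ))
    (X : ℕ → Ω → ℝ) (hXadapted : Adapted ℱ X)
    (hXpos : ∀ t : ℕ, t < T → ∀ᵐ ω ∂P,
      0 < (P[({ω' | X t ω' ≤ X (t+1) ω'}.indicator fun _ => (1:ℝ)) | ℱ t]) ω)
    (ρ : Ω → ℕ) (hρmeas : Measurable ρ)
    (hρdef : ∀ ω, ρ ω ≤ T ∧ (∀ t ≤ T, X t ω ≤ X (ρ ω) ω) ∧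
      (∀ t ≤ T, (∀ s ≤ T, X s ω ≤ X t ω) → t ≤ ρ ω))
    (Z : ℕ → Ω → ℝ)
    (hZ : ∀ t : ℕ,
      Z t =ᵐ[P] P[({ω | t < ρ ω}.indicator fun _ => (1:ℝ)) | ℱ t])
    (hZadapted : ∀ t, StronglyMeasurable[ℱ t] (Z t))
    (ζ : Ω → ℕ) (hζdef : ∀ ω, ζ ω = sInf {t : ℕ | Z t ω = 0})
    (hζstop : IsStoppingTime ℱ (fun ω => (ζ ω : WithTop ℕ)))
    (L : ℕ → Ω → ℝ)
    (hL0 : ∀ ω, L 0 ω = 1)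
    (hLrec : ∀ t : ℕ, ∀ᵐ ω ∂P, t + 1 ≤ ζ ω →
      L (t+1) ω = L t ω
        * (P[({ω' | t + 1 ≤ ρ ω'}.indicator fun _ => (1:ℝ)) | ℱ (t+1)]) ω
        / (P[({ω' | t + 1 ≤ ρ ω'}.indicator fun _ => (1:ℝ)) | ℱ t]) ω)
    (hLconst : ∀ᵐ ω ∂P, ∀ t : ℕ, ζ ω ≤ t → L t ω = L (ζ ω) ω)
    (Q : Measure Ω)
    (hQ : Q = P.withDensity fun ω => ENNReal.ofReal (L T ω)) :
    Q {ω | ρ ω = T} = 1 := by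
  subst hQ
  classical
  -- dispose of the trivial case T = 0
  rcases Nat.eq_zero_or_pos T with hT0 | hTpos
  · subst hT0
    have hset : {ω | ρ ω = 0} = Set.univ := by
      ext ω
      simp [Nat.le_zero.mp (hρdef ω).1]
    rw [hset, withDensity_apply _ MeasurableSet.univ, Measure.restrict_univ]
    simp [hL0]
  obtain ⟨t₀, rfl⟩ : ∃ t₀, T = t₀ + 1 := ⟨T - 1, by omega⟩
  -- basic measurability facts
  have hAmeas : ∀ u : ℕ, MeasurableSet {ω' | u ≤ ρ ω'} := fun u =>
    hρmeas measurableSet_Ici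
  have hIntInd : ∀ A : Set Ω, MeasurableSet A →
      Integrable (A.indicator fun _ => (1 : ℝ)) P := fun A hA =>
    (integrable_const (1 : ℝ)).indicator hA
  have hNnn : ∀ u : ℕ, ∀ᵐ ω ∂P,
      0 ≤ (P[({ω' | u ≤ ρ ω'}.indicator fun _ => (1:ℝ)) | ℱ u]) ω := by
    intro u
    filter_upwards [condExp_nonneg (μ := P) (m := ℱ u)
      (f := ({ω' | u ≤ ρ ω'}).indicator fun _ => (1:ℝ))
      (Eventually.of_forall fun ω =>
        Set.indicator_nonneg (fun _ _ => zero_le_one) ω)] with ω h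
    simpa using h
  have hZnn : ∀ t : ℕ, ∀ᵐ ω ∂P, 0 ≤ Z t ω := by
    intro t
    filter_upwards [hZ t, condExp_nonneg (μ := P) (m := ℱ t)
      (f := ({ω | t < ρ ω}).indicator fun _ => (1:ℝ))
      (Eventually.of_forall fun ω =>
        Set.indicator_nonneg (fun _ _ => zero_le_one) ω)] with ω h1 h2
    rw [h1]
    simpa using h2
  -- the conditional expectation of {t+1 ≤ ρ} given ℱ t is a.e. Z t
  have hD : ∀ t : ℕ,
      (P[({ω' | t + 1 ≤ ρ ω'}.indicator fun _ => (1:ℝ)) | ℱ t]) =ᵐ[P] Z t := by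
    intro t
    have h := (hZ t).symm
    have hsets : {ω | t < ρ ω} = {ω' | t + 1 ≤ ρ ω'} := rfl
    rwa [hsets] at h
  -- the density product process
  set g : ℕ → Ω → ℝ := fun t ω => ∏ s ∈ Finset.range t,
    ((P[({ω' | s + 1 ≤ ρ ω'}.indicator fun _ => (1:ℝ)) | ℱ (s+1)]) ω / Z s ω) with hg
  have hg0 : ∀ ω, g 0 ω = 1 := by
    intro ω; simp [hg]
  have hgsucc : ∀ t ω, g (t+1) ω
      = g t ω * ((P[({ω' | t + 1 ≤ ρ ω'}.indicator fun _ => (1:ℝ)) | ℱ (t+1)]) ω / Z t ω) := by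
    intro t ω
    simp only [hg]
    exact Finset.prod_range_succ _ t
  have hgnn : ∀ t : ℕ, ∀ᵐ ω ∂P, 0 ≤ g t ω := by
    intro t
    filter_upwards [ae_all_iff.2 hNnn, ae_all_iff.2 hZnn] with ω h1 h2
    simp only [hg]
    exact Finset.prod_nonneg fun s _ => div_nonneg (h1 (s+1)) (h2 s)
  have hgmeas : ∀ t u : ℕ, t ≤ u → Measurable[ℱ u] (g t) := by
    intro t u htu
    simp only [hg]
    refine Finset.measurable_prod _ fun s hs => ?_
    have hs' : s + 1 ≤ u := le_trans (Finset.mem_range.mp hs) htu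
    exact ((stronglyMeasurable_condExp.measurable).mono (ℱ.mono hs') le_rfl).div
      ((hZadapted s).measurable.mono (ℱ.mono (by omega)) le_rfl)
  -- the "no zero of Z yet" sets
  set SZ : ℕ → Set Ω := fun t => {ω | ∀ s, s < t → Z s ω ≠ 0} with hSZ
  have hSZmeas : ∀ t u : ℕ, t ≤ u + 1 → MeasurableSet[ℱ u] (SZ t) := by
    intro t u htu
    have hEq : SZ t = ⋂ s, ⋂ (_ : s < t), {ω | Z s ω ≠ 0} := by
      simp only [hSZ]
      ext ω; simp
    rw [hEq]
    refine MeasurableSet.iInter fun s => MeasurableSet.iInter fun hs => ?_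
    have h1 : MeasurableSet[ℱ s] {ω | Z s ω ≠ 0} :=
      ((hZadapted s).measurable (measurableSet_singleton 0)).compl
    exact ℱ.mono (by omega) _ h1
  -- first null set lemma: on {Z t = 0}, a.s. not t+1 ≤ ρ
  have hA1 : ∀ t : ℕ, P ({ω' | t + 1 ≤ ρ ω'} ∩ {ω | Z t ω = 0}) = 0 := by
    intro t
    have hSF : MeasurableSet[ℱ t] {ω | Z t ω = 0} :=
      (hZadapted t).measurable (measurableSet_singleton 0)
    have hSm : MeasurableSet {ω | Z t ω = 0} := ℱ.le t _ hSF
    have e1 : ∫ ω in {ω | Z t ω = 0},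
        (P[({ω' | t + 1 ≤ ρ ω'}.indicator fun _ => (1:ℝ)) | ℱ t]) ω ∂P
        = ∫ ω in {ω | Z t ω = 0}, ({ω' | t + 1 ≤ ρ ω'}.indicator fun _ => (1:ℝ)) ω ∂P :=
      setIntegral_condExp (ℱ.le t) (hIntInd _ (hAmeas (t+1))) hSF
    have e2 : ∫ ω in {ω | Z t ω = 0},
        (P[({ω' | t + 1 ≤ ρ ω'}.indicator fun _ => (1:ℝ)) | ℱ t]) ω ∂P = 0 := by
      rw [setIntegral_congr_ae hSm ((hD t).mono fun ω h hω => ?_)]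
      · exact integral_zero _ _
      · show (P[({ω' | t + 1 ≤ ρ ω'}.indicator fun _ => (1:ℝ)) | ℱ t]) ω = (fun _ => (0:ℝ)) ω
        rw [h]
        exact hω
    have e3 : (P ({ω' | t + 1 ≤ ρ ω'} ∩ {ω | Z t ω = 0})).toReal = 0 := by
      rw [← setIntegral_indicator_one' P _ (hAmeas (t+1)), ← e1, e2]
    rcases (ENNReal.toReal_eq_zero_iff _).mp e3 with h | h
    · exact h
    · exact absurd h (measure_ne_top _ _)
  -- the chain null-propagation lemma
  have hHnull : ∀ k t : ℕ, t₀ + 1 ≤ t + k → ∀ B : Set Ω, MeasurableSet[ℱ t] B →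
      P (B ∩ {ω | ∀ u, t ≤ u → u < t₀ + 1 → X u ω ≤ X (u+1) ω}) = 0 → P B = 0 := by
    intro k
    induction k with
    | zero =>
      intro t ht B hB h0
      have hEq : B ∩ {ω | ∀ u, t ≤ u → u < t₀ + 1 → X u ω ≤ X (u+1) ω} = B := by
        refine Set.inter_eq_left.mpr fun ω _ => ?_
        intro u hu hu'
        exact absurd hu' (by omega)
      rwa [hEq] at h0
    | succ k ih =>
      intro t ht B hB h0
      rcases le_or_gt (t₀ + 1) t with hTt | htT
      · refine ih t (by omega) B hB ?_
        have hEq : B ∩ {ω | ∀ u, t ≤ u → u < t₀ + 1 → X u ω ≤ X (u+1) ω} = B := by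
          refine Set.inter_eq_left.mpr fun ω _ => ?_
          intro u hu hu'
          exact absurd hu' (by omega)
        rw [hEq] at h0 ⊢
        exact h0
      · have hsplit : B ∩ {ω | ∀ u, t ≤ u → u < t₀ + 1 → X u ω ≤ X (u+1) ω}
            = (B ∩ {ω' | X t ω' ≤ X (t+1) ω'})
              ∩ {ω | ∀ u, t + 1 ≤ u → u < t₀ + 1 → X u ω ≤ X (u+1) ω} := by
          ext ω
          constructor
          · rintro ⟨hB', hH⟩
            exact ⟨⟨hB', hH t le_rfl htT⟩, fun u hu hu' => hH u (by omega) hu'⟩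
          · rintro ⟨⟨hB', hX⟩, hH⟩
            refine ⟨hB', fun u hu hu' => ?_⟩
            rcases Nat.eq_or_lt_of_le hu with h | h
            · exact h ▸ hX
            · exact hH u (by omega) hu'
        have hB' : MeasurableSet[ℱ (t+1)] (B ∩ {ω' | X t ω' ≤ X (t+1) ω'}) := by
          refine (ℱ.mono (Nat.le_succ t) _ hB).inter ?_
          exact measurableSet_le
            (Measurable.mono (hXadapted t) (ℱ.mono (Nat.le_succ t)) le_rfl)
            (hXadapted (t+1))
        have h1 : P (B ∩ {ω' | X t ω' ≤ X (t+1) ω'}) = 0 := by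
          refine ih (t+1) (by omega) _ hB' ?_
          rw [← hsplit]
          exact h0
        have hXset : MeasurableSet {ω' | X t ω' ≤ X (t+1) ω'} :=
          measurableSet_le (Measurable.mono (hXadapted t) (ℱ.le t) le_rfl)
            (Measurable.mono (hXadapted (t+1)) (ℱ.le (t+1)) le_rfl)
        have hintegral : ∫ ω in B,
            (P[({ω' | X t ω' ≤ X (t+1) ω'}.indicator fun _ => (1:ℝ)) | ℱ t]) ω ∂P = 0 := by
          rw [setIntegral_condExp (ℱ.le t) (hIntInd _ hXset) hB,
            setIntegral_indicator_one' P _ hXset, Set.inter_comm, h1]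
          simp
        exact null_of_setIntegral_zero integrable_condExp (hXpos t (by omega))
          (ℱ.le t B hB) hintegral
  -- second null set lemma: on {Z t = 0}, a.s. not t ≤ ρ (for t < T)
  have hA2 : ∀ t : ℕ, t < t₀ + 1 → P ({ω | t ≤ ρ ω} ∩ {ω | Z t ω = 0}) = 0 := by
    intro t htT
    set B : Set Ω := {ω | Z t ω = 0} ∩ {ω | ∀ s, s ≤ t → X s ω ≤ X t ω} with hBdef
    have hBmeas : MeasurableSet[ℱ t] B := by
      refine ((hZadapted t).measurable (measurableSet_singleton 0)).inter ?_
      have hEq : {ω | ∀ s, s ≤ t → X s ω ≤ X t ω}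
          = ⋂ s, ⋂ (_ : s ≤ t), {ω | X s ω ≤ X t ω} := by
        ext ω; simp
      rw [hEq]
      refine MeasurableSet.iInter fun s => MeasurableSet.iInter fun hs => ?_
      exact measurableSet_le (Measurable.mono (hXadapted s) (ℱ.mono hs) le_rfl)
        (hXadapted t)
    have hsub : B ∩ {ω | ∀ u, t ≤ u → u < t₀ + 1 → X u ω ≤ X (u+1) ω}
        ⊆ {ω' | t + 1 ≤ ρ ω'} ∩ {ω | Z t ω = 0} := by
      rintro ω ⟨⟨hZ0, hXmax⟩, hH⟩
      have hXT : ∀ s, s ≤ t₀ + 1 → X s ω ≤ X (t₀ + 1) ω := by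
        intro s hs
        rcases le_or_gt s t with h | h
        · refine le_trans (hXmax s h) ?_
          exact chain_mono (fun u => X u ω) (t₀ + 1) t (by omega)
            (fun u hu hun => hH u hu hun)
        · exact chain_mono (fun u => X u ω) (t₀ + 1) s hs
            (fun u hu hun => hH u (by omega) hun)
      have hρω : t₀ + 1 ≤ ρ ω := (hρdef ω).2.2 (t₀ + 1) le_rfl hXT
      exact ⟨(by omega : t + 1 ≤ ρ ω), hZ0⟩
    have hPB : P B = 0 :=
      hHnull (t₀ + 1) t (by omega) B hBmeas (measure_mono_null hsub (hA1 t))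
    have hsub2 : {ω | t ≤ ρ ω} ∩ {ω | Z t ω = 0}
        ⊆ B ∪ ({ω' | t + 1 ≤ ρ ω'} ∩ {ω | Z t ω = 0}) := by
      rintro ω ⟨hρω, hZ0⟩
      rcases Nat.eq_or_lt_of_le hρω with h | h
      · left
        refine ⟨hZ0, fun s hs => ?_⟩
        have := (hρdef ω).2.1 s (le_trans hs (by omega))
        rwa [← h] at this
      · right
        exact ⟨(by omega : t + 1 ≤ ρ ω), hZ0⟩
    exact measure_mono_null hsub2 (measure_union_null hPB (hA1 t))
  have hA2ae : ∀ t : ℕ, t < t₀ + 1 → ∀ᵐ ω ∂P, t ≤ ρ ω → Z t ω ≠ 0 := by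
    intro t ht
    rw [ae_iff]
    refine measure_mono_null (fun ω hω => ?_) (hA2 t ht)
    simp only [Set.mem_setOf_eq, Classical.not_imp, not_not] at hω
    exact ⟨hω.1, hω.2⟩
  have hZposAll : ∀ᵐ ω ∂P, ∀ s, s < t₀ + 1 → (s ≤ ρ ω → Z s ω ≠ 0) := by
    rw [ae_all_iff]
    intro s
    by_cases h : s < t₀ + 1
    · filter_upwards [hA2ae s h] with ω h1
      intro _
      exact h1
    · exact Eventually.of_forall fun ω h' => absurd h' h
  -- Z at time T vанishes a.s.
  have hZT0 : Z (t₀ + 1) =ᵐ[P] (0 : Ω → ℝ) := by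
    have hempty : {ω | t₀ + 1 < ρ ω} = (∅ : Set Ω) := by
      ext ω
      simp only [Set.mem_setOf_eq, Set.mem_empty_iff_false, iff_false, not_lt]
      exact (hρdef ω).1
    have h := hZ (t₀ + 1)
    rw [hempty] at h
    have h0 : P[((∅ : Set Ω).indicator fun _ => (1:ℝ)) | ℱ (t₀ + 1)] = 0 := by
      rw [Set.indicator_empty]
      exact condExp_zero
    rw [h0] at h
    exact h
  -- conditional expectation of {T ≤ ρ} given ℱ T is the indicator itself
  have hρTset : {ω' | t₀ + 1 ≤ ρ ω'} = {ω | ∀ s, s ≤ t₀ + 1 → X s ω ≤ X (t₀ + 1) ω} := by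
    ext ω
    constructor
    · intro h s hs
      have hρω : ρ ω = t₀ + 1 := le_antisymm (hρdef ω).1 h
      have := (hρdef ω).2.1 s hs
      rwa [hρω] at this
    · intro h
      exact (hρdef ω).2.2 (t₀ + 1) le_rfl h
  have hmaxmeasF : MeasurableSet[ℱ (t₀ + 1)] {ω' | t₀ + 1 ≤ ρ ω'} := by
    rw [hρTset]
    have hEq : {ω | ∀ s, s ≤ t₀ + 1 → X s ω ≤ X (t₀ + 1) ω}
        = ⋂ s, ⋂ (_ : s ≤ t₀ + 1), {ω | X s ω ≤ X (t₀ + 1) ω} := by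
      ext ω; simp
    rw [hEq]
    refine MeasurableSet.iInter fun s => MeasurableSet.iInter fun hs => ?_
    exact measurableSet_le (Measurable.mono (hXadapted s) (ℱ.mono hs) le_rfl)
      (hXadapted (t₀ + 1))
  have hNT : P[({ω' | t₀ + 1 ≤ ρ ω'}.indicator fun _ => (1:ℝ)) | ℱ (t₀ + 1)]
      = ({ω' | t₀ + 1 ≤ ρ ω'}.indicator fun _ => (1:ℝ)) := by
    refine condExp_of_stronglyMeasurable (ℱ.le _) ?_ (hIntInd _ (hAmeas _))
    exact (stronglyMeasurable_const).indicator hmaxmeasF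
  -- a.e. on {ρ = T}, L agrees with the product g
  have hLg : ∀ᵐ ω ∂P, ρ ω = t₀ + 1 → ∀ t, t ≤ t₀ + 1 → L t ω = g t ω := by
    filter_upwards [hZT0, ae_all_iff.2 hLrec, ae_all_iff.2 hD, hZposAll]
      with ω h1 h2 h3 h4
    intro hρω
    have hZne : ∀ s, s < t₀ + 1 → Z s ω ≠ 0 := fun s hs =>
      h4 s hs (by omega)
    have hZTω : Z (t₀ + 1) ω = 0 := h1
    have hζω : ζ ω = t₀ + 1 := by
      rw [hζdef ω]
      refine le_antisymm (Nat.sInf_le hZTω) ?_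
      refine le_csInf ⟨t₀ + 1, hZTω⟩ fun u hu => ?_
      by_contra hlt
      push_neg at hlt
      exact hZne u hlt hu
    intro t
    induction t with
    | zero =>
      intro _
      rw [hL0, hg0]
    | succ t ih =>
      intro ht
      have hrec := h2 t (by omega)
      rw [hrec, ih (by omega), h3 t, hgsucc t ω, mul_div_assoc]
  -- the two lintegral manipulation steps
  have hSL : ∀ t : ℕ,
      ∫⁻ ω, {ω' | t + 1 ≤ ρ ω'}.indicator (fun _ => (1:ℝ≥0∞)) ω *
          ((SZ (t+1)).indicator (fun _ => (1:ℝ≥0∞)) ω * ENNReal.ofReal (g t ω / Z t ω)) ∂P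
        = ∫⁻ ω, (SZ (t+1)).indicator (fun _ => (1:ℝ≥0∞)) ω * ENNReal.ofReal (g t ω) ∂P := by
    intro t
    have hφmeas : Measurable[ℱ t] (fun ω =>
        (SZ (t+1)).indicator (fun _ => (1:ℝ≥0∞)) ω * ENNReal.ofReal (g t ω / Z t ω)) := by
      refine Measurable.mul ?_ ?_
      · exact measurable_const.indicator (hSZmeas (t+1) t le_rfl)
      · exact ((hgmeas t t le_rfl).div (hZadapted t).measurable).ennreal_ofReal
    refine (lintegral_indicator_mul_condexp P (ℱ.le t) (hAmeas (t+1)) hφmeas).trans ?_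
    refine lintegral_congr_ae ?_
    filter_upwards [hD t, hZnn t] with ω h1 h2
    rw [h1]
    by_cases hω : ω ∈ SZ (t+1)
    · have hZt : Z t ω ≠ 0 := hω t (Nat.lt_succ_self t)
      rw [Set.indicator_of_mem hω, one_mul, one_mul, ← ENNReal.ofReal_mul h2]
      congr 1
      rw [mul_comm, div_mul_cancel₀ _ hZt]
    · simp [Set.indicator_of_notMem hω]
  have hSL2 : ∀ t : ℕ, t + 1 < t₀ + 1 →
      ∫⁻ ω, (SZ (t+1+1)).indicator (fun _ => (1:ℝ≥0∞)) ω * ENNReal.ofReal (g (t+1) ω) ∂P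
        = ∫⁻ ω, {ω' | t + 1 ≤ ρ ω'}.indicator (fun _ => (1:ℝ≥0∞)) ω *
            ((SZ (t+1)).indicator (fun _ => (1:ℝ≥0∞)) ω * ENNReal.ofReal (g t ω / Z t ω)) ∂P := by
    intro t ht
    have hψmeas : Measurable[ℱ (t+1)] (fun ω =>
        (SZ (t+1+1)).indicator (fun _ => (1:ℝ≥0∞)) ω * ENNReal.ofReal (g t ω / Z t ω)) := by
      refine Measurable.mul ?_ ?_
      · exact measurable_const.indicator (hSZmeas (t+1+1) (t+1) le_rfl)
      · exact ((hgmeas t (t+1) (by omega)).div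
          ((hZadapted t).measurable.mono (ℱ.mono (by omega)) le_rfl)).ennreal_ofReal
    have step1 : ∫⁻ ω, (SZ (t+1+1)).indicator (fun _ => (1:ℝ≥0∞)) ω *
        ENNReal.ofReal (g (t+1) ω) ∂P
        = ∫⁻ ω, ENNReal.ofReal
            ((P[({ω' | t + 1 ≤ ρ ω'}.indicator fun _ => (1:ℝ)) | ℱ (t+1)]) ω) *
          ((SZ (t+1+1)).indicator (fun _ => (1:ℝ≥0∞)) ω * ENNReal.ofReal (g t ω / Z t ω)) ∂P := by
      refine lintegral_congr_ae ?_
      filter_upwards [hNnn (t+1)] with ω h1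
      by_cases hω : ω ∈ SZ (t+1+1)
      · rw [Set.indicator_of_mem hω, one_mul, one_mul, hgsucc t ω]
        rw [show g t ω * ((P[({ω' | t + 1 ≤ ρ ω'}.indicator fun _ => (1:ℝ)) | ℱ (t+1)]) ω / Z t ω)
            = (P[({ω' | t + 1 ≤ ρ ω'}.indicator fun _ => (1:ℝ)) | ℱ (t+1)]) ω * (g t ω / Z t ω)
          by ring]
        exact ENNReal.ofReal_mul h1
      · simp [Set.indicator_of_notMem hω]
    refine step1.trans ?_
    refine ((lintegral_indicator_mul_condexp P (ℱ.le (t+1)) (hAmeas (t+1)) hψmeas).symm).trans ?_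
    refine lintegral_congr_ae ?_
    filter_upwards [hA2ae (t+1) ht] with ω h1
    by_cases hρω : t + 1 ≤ ρ ω
    · have hZt1 : Z (t+1) ω ≠ 0 := h1 hρω
      have hρω' : ω ∈ {ω' | t + 1 ≤ ρ ω'} := hρω
      rw [Set.indicator_of_mem hρω', one_mul, one_mul]
      by_cases hs : ω ∈ SZ (t+1)
      · have hs2 : ω ∈ SZ (t+1+1) := by
          intro s hsu
          rcases Nat.lt_succ_iff_lt_or_eq.mp hsu with h | h
          · exact hs s h
          · rw [h]; exact hZt1
        rw [Set.indicator_of_mem hs, Set.indicator_of_mem hs2]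
      · have hs2 : ω ∉ SZ (t+1+1) := fun h => hs fun s hsu => h s (by omega)
        rw [Set.indicator_of_notMem hs, Set.indicator_of_notMem hs2]
    · have hρω' : ω ∉ {ω' | t + 1 ≤ ρ ω'} := hρω
      rw [Set.indicator_of_notMem hρω', zero_mul, zero_mul]
  -- the base case of the induction
  have hbase : ∫⁻ ω, (SZ (0+1)).indicator (fun _ => (1:ℝ≥0∞)) ω * ENNReal.ofReal (g 0 ω) ∂P
      = 1 := by
    have h1 : ∀ ω, (SZ (0+1)).indicator (fun _ => (1:ℝ≥0∞)) ω * ENNReal.ofReal (g 0 ω)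
        = (SZ (0+1)).indicator (fun _ => (1:ℝ≥0∞)) ω := by
      intro ω
      rw [hg0, ENNReal.ofReal_one, mul_one]
    rw [lintegral_congr h1, lintegral_indicator_const (ℱ.le 1 _ (hSZmeas 1 1 (by omega))), one_mul]
    have hae : ∀ᵐ ω ∂P, ω ∈ SZ (0+1) := by
      filter_upwards [hA2ae 0 (by omega)] with ω h1
      intro s hs
      have : s = 0 := by omega
      rw [this]
      exact h1 (Nat.zero_le _)
    refine le_antisymm prob_le_one ?_
    have : P Set.univ ≤ P (SZ (0+1)) :=
      measure_mono_ae (hae.mono fun ω h _ => h)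
    simpa using this
  -- the main induction
  have hmain : ∀ u : ℕ, u < t₀ + 1 →
      ∫⁻ ω, (SZ (u+1)).indicator (fun _ => (1:ℝ≥0∞)) ω * ENNReal.ofReal (g u ω) ∂P = 1 := by
    intro u
    induction u with
    | zero => intro _; exact hbase
    | succ t ih =>
      intro h
      exact ((hSL2 t h).trans (hSL t)).trans (ih (by omega))
  -- assembling everything
  have hsetρ : MeasurableSet {ω | ρ ω = t₀ + 1} := hρmeas (measurableSet_singleton _)
  have htop : ({ω | ρ ω = t₀ + 1}).indicator (fun ω => ENNReal.ofReal (L (t₀ + 1) ω))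
      =ᵐ[P] fun ω => {ω' | t₀ + 1 ≤ ρ ω'}.indicator (fun _ => (1:ℝ≥0∞)) ω *
        ((SZ (t₀+1)).indicator (fun _ => (1:ℝ≥0∞)) ω * ENNReal.ofReal (g t₀ ω / Z t₀ ω)) := by
    filter_upwards [hLg, hZposAll] with ω h1 h2
    by_cases hρω : ρ ω = t₀ + 1
    · have hTle : t₀ + 1 ≤ ρ ω := le_of_eq hρω.symm
      have hmemSZ : ω ∈ SZ (t₀ + 1) := fun s hs => h2 s hs (by omega)
      have hNω : (P[({ω' | t₀ + 1 ≤ ρ ω'}.indicator fun _ => (1:ℝ)) | ℱ (t₀ + 1)]) ω = 1 := by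
        rw [hNT]
        exact Set.indicator_of_mem (show ω ∈ {ω' | t₀ + 1 ≤ ρ ω'} from hTle) _
      have hLT : L (t₀ + 1) ω = g t₀ ω / Z t₀ ω := by
        rw [h1 hρω (t₀ + 1) le_rfl, hgsucc t₀ ω, hNω, mul_one_div]
      rw [Set.indicator_of_mem (show ω ∈ {ω | ρ ω = t₀ + 1} from hρω),
        Set.indicator_of_mem (show ω ∈ {ω' | t₀ + 1 ≤ ρ ω'} from hTle),
        Set.indicator_of_mem hmemSZ, one_mul, one_mul, hLT]
    · have hTle' : ¬ t₀ + 1 ≤ ρ ω := fun h => hρω (le_antisymm (hρdef ω).1 h)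
      rw [Set.indicator_of_notMem (show ω ∉ {ω | ρ ω = t₀ + 1} from hρω),
        Set.indicator_of_notMem (show ω ∉ {ω' | t₀ + 1 ≤ ρ ω'} from hTle'), zero_mul]
  calc (P.withDensity fun ω => ENNReal.ofReal (L (t₀ + 1) ω)) {ω | ρ ω = t₀ + 1}
      = ∫⁻ ω in {ω | ρ ω = t₀ + 1}, ENNReal.ofReal (L (t₀ + 1) ω) ∂P :=
        withDensity_apply _ hsetρ
    _ = ∫⁻ ω, ({ω | ρ ω = t₀ + 1}).indicator (fun ω => ENNReal.ofReal (L (t₀ + 1) ω)) ω ∂P :=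
        (lintegral_indicator hsetρ _).symm
    _ = ∫⁻ ω, {ω' | t₀ + 1 ≤ ρ ω'}.indicator (fun _ => (1:ℝ≥0∞)) ω *
          ((SZ (t₀+1)).indicator (fun _ => (1:ℝ≥0∞)) ω * ENNReal.ofReal (g t₀ ω / Z t₀ ω)) ∂P :=
        lintegral_congr_ae htop
    _ = ∫⁻ ω, (SZ (t₀+1)).indicator (fun _ => (1:ℝ≥0∞)) ω * ENNReal.ofReal (g t₀ ω) ∂P :=
        hSL t₀
    _ = 1 := hmain t₀ (Nat.lt_succ_self t₀)

end RandTimesDiscrete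
end
end
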